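/- arXiv:1904.02799 — 5 statements merged into one kernel-verified Lean document; each statement's English description precedes it below -/
import Mathlib

section
/- If a digraph D can be partitioned into k ≥ 2 induced subdigraphs H_1, ..., H_k such that each H_i satisfies the α-property and α(D) = α(H_1) + ... + α(H_k), then D satisfies the α-property. -/
open Relation

variable {V : Type*}

/-- `u` and `v` are adjacent in the digraph with arc relation `A`. -/
def DAdj (A : V → V → Prop) (u v : V) : Prop := A u v ∨ A v u

/-- `v` is a source: no arc enters `v`. -/
def IsSource (A : V → V → Prop) (v : V) : Prop := ∀ u, ¬ A u v

/-- `v` is a sink: no arc leaves `v`. -/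
def IsSink (A : V → V → Prop) (v : V) : Prop := ∀ u, ¬ A v u

/-- A stable (independent) set of the digraph. -/
def IsStable (A : V → V → Prop) (S : Set V) : Prop :=
  ∀ u ∈ S, ∀ v ∈ S, u ≠ v → ¬ DAdj A u v

/-- The stability number. -/
noncomputable def alphaNum (A : V → V → Prop) : ℕ :=
  sSup {n | ∃ S : Set V, IsStable A S ∧ S.ncard = n}

/-- A maximum stable set. -/
def IsMaxStable (A : V → V → Prop) (S : Set V) : Prop :=
  IsStable A S ∧ ∀ T : Set V, IsStable A T → T.ncard ≤ S.ncard

/-- A (nonempty) directed path, given as its list of vertices. -/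
def IsDiPath (A : V → V → Prop) (l : List V) : Prop :=
  l ≠ [] ∧ l.Nodup ∧ l.Chain' A

/-- A path partition of the digraph: every vertex lies on exactly one of the paths. -/
def IsPathPartition (A : V → V → Prop) (P : Set (List V)) : Prop :=
  (∀ l ∈ P, IsDiPath A l) ∧ ∀ v : V, ∃! l, l ∈ P ∧ v ∈ l

/-- An `S`-path partition: each path contains exactly one vertex of `S`. -/
def IsSPartition (A : V → V → Prop) (S : Set V) (P : Set (List V)) : Prop :=
  IsPathPartition A P ∧ ∀ l ∈ P, ∃! s, s ∈ l ∧ s ∈ S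

/-- An `S`-BE-path partition: each path contains exactly one vertex of `S`,
which is moreover an endpoint of the path. -/
def IsBEPartition (A : V → V → Prop) (S : Set V) (P : Set (List V)) : Prop :=
  IsSPartition A S P ∧
    ∀ l ∈ P, ∀ s ∈ l, s ∈ S → l.head? = some s ∨ l.getLast? = some s

/-- The α-property: every maximum stable set admits an `S`-path partition. -/
def AlphaProperty (A : V → V → Prop) : Prop :=
  ∀ S : Set V, IsMaxStable A S → ∃ P, IsSPartition A S P

/-- The BE-property: every maximum stable set admits an `S`-BE-path partition. -/
def BEProperty (A : V → V → Prop) : Prop :=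
  ∀ S : Set V, IsMaxStable A S → ∃ P, IsBEPartition A S P

/-- α-diperfect: every induced subdigraph satisfies the α-property. -/
def AlphaDiperfect (A : V → V → Prop) : Prop :=
  ∀ W : Set V, AlphaProperty (fun a b : W => A a.1 b.1)

/-- BE-diperfect: every induced subdigraph satisfies the BE-property. -/
def BEDiperfect (A : V → V → Prop) : Prop :=
  ∀ W : Set V, BEProperty (fun a b : W => A a.1 b.1)

/-- Mutual reachability. -/
def MutReach (A : V → V → Prop) (u v : V) : Prop :=
  ReflTransGen A u v ∧ ReflTransGen A v u

/-- Semicomplete digraph: any two distinct vertices are adjacent. -/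
def Semicomplete (A : V → V → Prop) : Prop :=
  ∀ u v : V, u ≠ v → DAdj A u v

/-- Strongly connected digraph. -/
def Strong (A : V → V → Prop) : Prop :=
  ∀ u v : V, ReflTransGen A u v

/-- The digraph has an induced transitive triangle. -/
def HasInducedTransitiveTriangle (A : V → V → Prop) : Prop :=
  ∃ a b c : V, a ≠ b ∧ a ≠ c ∧ b ≠ c ∧
    A a b ∧ A a c ∧ A c b ∧ ¬ A b a ∧ ¬ A c a ∧ ¬ A b c

/-- The digraph is a blocking odd cycle: its underlying graph is an odd cycle
`x_1 x_2 ⋯ x_{2k+1} x_1` (with `k ≥ 1`; here `x i` is `x_{i+1}`), and both `x_1`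
and `x_2` are each a source or a sink. -/
def IsBlockingOddCycle (A : V → V → Prop) : Prop :=
  ∃ (k : ℕ) (x : ZMod (2 * k + 1) → V), 1 ≤ k ∧ Function.Bijective x ∧
    (∀ i j, DAdj A (x i) (x j) ↔ (j = i + 1 ∨ i = j + 1)) ∧
    (IsSource A (x 0) ∨ IsSink A (x 0)) ∧
    (IsSource A (x 1) ∨ IsSink A (x 1))

/-- The digraph is an anti-directed odd cycle: its underlying graph is an odd cycle
`x_1 ⋯ x_{2k+1} x_1` with `k ≥ 2` (here `x m` is `x_{m+1}`), and each of
`x_1, x_2, x_3, x_4, x_6, x_8, …, x_{2k}` is a source or a sink. -/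
def IsAntiDirectedOddCycle (A : V → V → Prop) : Prop :=
  ∃ (k : ℕ) (x : ZMod (2 * k + 1) → V), 2 ≤ k ∧ Function.Bijective x ∧
    (∀ i j, DAdj A (x i) (x j) ↔ (j = i + 1 ∨ i = j + 1)) ∧
    ∀ m : ℕ, m ≤ 2 * k →
      (m ≤ 3 ∨ (5 ≤ m ∧ m ≤ 2 * k - 1 ∧ Odd m)) →
      (IsSource A (x (m : ZMod (2 * k + 1))) ∨ IsSink A (x (m : ZMod (2 * k + 1))))

/-- `v` is a universal vertex. -/
def IsUniversal (A : V → V → Prop) (v : V) : Prop := ∀ u, u ≠ v → DAdj A u v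

/-- The underlying simple graph of a digraph. -/
def underlyingGraph (A : V → V → Prop) : SimpleGraph V where
  Adj u v := u ≠ v ∧ DAdj A u v
  symm := ⟨fun _ _ h => ⟨h.1.symm, h.2.symm⟩⟩
  loopless := ⟨fun _ h => h.1 rfl⟩

/-- The underlying graph of the digraph is a cycle. -/
def UnderlyingIsCycle (A : V → V → Prop) : Prop :=
  ∃ (n : ℕ) (x : ZMod n → V), 3 ≤ n ∧ Function.Bijective x ∧
    ∀ i j, DAdj A (x i) (x j) ↔ (j = i + 1 ∨ i = j + 1)

/-- A perfect graph: every induced subgraph has chromatic number equal to its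
clique number. -/
def GraphPerfect (G : SimpleGraph V) : Prop :=
  ∀ W : Set V, (G.induce W).chromaticNumber = ((G.induce W).cliqueNum : ℕ∞)

/-- A Hamilton directed path whose endpoints are `{s, t}` (in some order). -/
def HamiltonPathBetween (A : V → V → Prop) (s t : V) : Prop :=
  ∃ l : List V, IsDiPath A l ∧ (∀ v : V, v ∈ l) ∧
    ((l.head? = some s ∧ l.getLast? = some t) ∨
      (l.head? = some t ∧ l.getLast? = some s))

/-- A Hamilton directed path starting at `s` and ending at `t`. -/
def HamiltonPathFromTo (A : V → V → Prop) (s t : V) : Prop :=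
  ∃ l : List V, IsDiPath A l ∧ (∀ v : V, v ∈ l) ∧
    l.head? = some s ∧ l.getLast? = some t

/-- The exceptional strong semicomplete digraph on four vertices
(`a,b,c,d = 0,1,2,3`): the 4-cycle `a→d→c→b→a` together with digons `a↔c`, `b↔d`. -/
def BadFour : Fin 4 → Fin 4 → Prop := fun u v =>
  (u, v) ∈ ({(0,3), (3,2), (2,1), (1,0), (0,2), (2,0), (1,3), (3,1)} :
    Set (Fin 4 × Fin 4))

/-- A locally in-semicomplete digraph: any two in-neighbours of a vertex are adjacent. -/
def LocallyInSemicomplete (A : V → V → Prop) : Prop :=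
  ∀ v u w : V, A u v → A w v → u ≠ w → DAdj A u w

/-- A strong component: a maximal set of pairwise mutually reachable vertices. -/
def IsStrongComponent (A : V → V → Prop) (X : Set V) : Prop :=
  X.Nonempty ∧ (∀ u ∈ X, ∀ v ∈ X, MutReach A u v) ∧
    ∀ u v, v ∈ X → MutReach A u v → u ∈ X

/-- `C` is the vertex set of an induced cycle of `G`. -/
def InducedCycleSet (G : SimpleGraph V) (C : Set V) : Prop :=
  ∃ (n : ℕ) (x : ZMod n → V), 3 ≤ n ∧ Function.Injective x ∧ Set.range x = C ∧
    ∀ i j, G.Adj (x i) (x j) ↔ (j = i + 1 ∨ i = j + 1)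

/-- `G` contains a subdivision of `K₄`: four branch vertices joined by
pairwise internally disjoint paths. -/
def HasK4Subdivision (G : SimpleGraph V) : Prop :=
  ∃ (b : Fin 4 → V) (P : ∀ i j : Fin 4, G.Walk (b i) (b j)),
    Function.Injective b ∧
    (∀ i j, i ≠ j → (P i j).IsPath) ∧
    (∀ i j m, i ≠ j → b m ∈ (P i j).support → m = i ∨ m = j) ∧
    (∀ i j k l, i ≠ j → k ≠ l → ({i, j} : Finset (Fin 4)) ≠ {k, l} →
      ∀ v, v ∈ (P i j).support → v ∈ (P k l).support →
        (v = b i ∨ v = b j) ∧ (v = b k ∨ v = b l))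

/-- 2-connected: connected, at least 3 vertices, and no cut vertex. -/
def TwoConnected (G : SimpleGraph V) : Prop :=
  G.Connected ∧ 3 ≤ Nat.card V ∧
    ∀ v : V, (G.induce {u | u ≠ v}).Preconnected

lemma stable_ncard_le_alpha {V : Type*} [Finite V] (A : V → V → Prop) {T : Set V}
    (hT : IsStable A T) : T.ncard ≤ alphaNum A := by
  apply le_csSup
  · refine ⟨Nat.card V, ?_⟩
    rintro n ⟨S, -, rfl⟩
    exact (Set.ncard_le_ncard (Set.subset_univ S) Set.finite_univ).trans_eq (Set.ncard_univ V)
  · exact ⟨T, hT, rfl⟩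

lemma maxstable_ncard {V : Type*} [Finite V] (A : V → V → Prop) {S : Set V}
    (hS : IsMaxStable A S) : S.ncard = alphaNum A := by
  refine le_antisymm (stable_ncard_le_alpha A hS.1) ?_
  refine csSup_le ⟨0, ∅, by simp [IsStable], by simp⟩ ?_
  rintro n ⟨T, hT, rfl⟩
  exact hS.2 T hT

/-- If `D` is partitioned into `k ≥ 2` induced subdigraphs each satisfying the
α-property, with `α(D)` equal to the sum of their stability numbers, then `D` satisfies
the α-property. -/
theorem partition_alphaProperty {V : Type*} [Finite V] (A : V → V → Prop)
    (hirr : ∀ v, ¬ A v v) (k : ℕ) (hk : 2 ≤ k) (W : Fin k → Set V)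
    (hne : ∀ i, (W i).Nonempty)
    (hdisj : Pairwise fun i j => Disjoint (W i) (W j))
    (hcover : (⋃ i, W i) = Set.univ)
    (hprop : ∀ i, AlphaProperty (fun a b : W i => A a.1 b.1))
    (halpha : alphaNum A = ∑ i, alphaNum (fun a b : W i => A a.1 b.1)) :
    AlphaProperty A := by
  classical
  have : Fintype V := Fintype.ofFinite V
  intro S hS
  have hmemW : ∀ v : V, ∃ i, v ∈ W i := by
    intro v
    have : v ∈ ⋃ i, W i := hcover ▸ Set.mem_univ v
    simpa using this
  have huniq : ∀ {v : V} {i j}, v ∈ W i → v ∈ W j → i = j := by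
    intro v i j hi hj
    by_contra h
    exact Set.disjoint_left.mp (hdisj h) hi hj
  set Si : ∀ i, Set (W i) := fun i => {x | x.1 ∈ S} with hSidef
  have hstab : ∀ i, IsStable (fun a b : W i => A a.1 b.1) (Si i) := by
    intro i u hu v hv huv
    exact hS.1 u.1 hu v.1 hv (fun h => huv (Subtype.ext h))
  have himg : ∀ i, Subtype.val '' (Si i) = S ∩ W i := by
    intro i; ext v
    constructor
    · rintro ⟨w, hw, rfl⟩; exact ⟨hw, w.2⟩
    · rintro ⟨hvS, hvW⟩; exact ⟨⟨v, hvW⟩, hvS, rfl⟩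
  have hcard : ∀ i, (Si i).ncard = (S ∩ W i).ncard := by
    intro i; rw [← himg i, Set.ncard_image_of_injective _ Subtype.val_injective]
  have hsum : S.ncard = ∑ i, (Si i).ncard := by
    have h1 : S.toFinset = Finset.univ.biUnion fun i => (S ∩ W i).toFinset := by
      ext v
      simp only [Set.mem_toFinset, Finset.mem_biUnion, Finset.mem_univ, true_and,
        Set.mem_inter_iff]
      constructor
      · intro hv
        obtain ⟨i, hi⟩ := hmemW v
        exact ⟨i, hv, hi⟩
      · rintro ⟨i, hv, -⟩; exact hv
    have h2 : S.ncard = S.toFinset.card := Set.ncard_eq_toFinset_card' S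
    rw [h2, h1, Finset.card_biUnion]
    · refine Finset.sum_congr rfl fun i _ => ?_
      rw [hcard i, Set.ncard_eq_toFinset_card']
    · intro i _ j _ hij
      rw [Function.onFun, Finset.disjoint_left]
      intro a ha hb
      simp only [Set.mem_toFinset, Set.mem_inter_iff] at ha hb
      exact hij (huniq ha.2 hb.2)
  have hle : ∀ i, (Si i).ncard ≤ alphaNum (fun a b : W i => A a.1 b.1) :=
    fun i => stable_ncard_le_alpha _ (hstab i)
  have hsumeq : ∑ i, (Si i).ncard = ∑ i, alphaNum (fun a b : W i => A a.1 b.1) := by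
    rw [← hsum, maxstable_ncard A hS, halpha]
  have heq : ∀ i, (Si i).ncard = alphaNum (fun a b : W i => A a.1 b.1) := by
    intro i
    exact (Finset.sum_eq_sum_iff_of_le (fun i _ => hle i)).mp hsumeq i (Finset.mem_univ i)
  have hmax : ∀ i, IsMaxStable (fun a b : W i => A a.1 b.1) (Si i) := by
    intro i
    exact ⟨hstab i, fun T hT => (stable_ncard_le_alpha _ hT).trans (heq i).ge⟩
  choose P hP using fun i => hprop i (Si i) (hmax i)
  refine ⟨⋃ i, (fun m : List (W i) => m.map Subtype.val) '' P i, ⟨?_, ?_⟩, ?_⟩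
  · rintro l hl
    rw [Set.mem_iUnion] at hl
    obtain ⟨i, m, hm, rfl⟩ := hl
    obtain ⟨hne', hnd, hch⟩ := (hP i).1.1 m hm
    refine ⟨fun h => hne' (List.map_eq_nil_iff.mp h), hnd.map Subtype.val_injective, ?_⟩
    exact List.isChain_map_of_isChain Subtype.val (fun _ _ h => h) hch
  · intro v
    obtain ⟨i, hvi⟩ := hmemW v
    obtain ⟨m, ⟨hmP, hvm⟩, hmu⟩ := (hP i).1.2 ⟨v, hvi⟩
    refine ⟨m.map Subtype.val,
      ⟨Set.mem_iUnion.mpr ⟨i, m, hmP, rfl⟩, List.mem_map.mpr ⟨_, hvm, rfl⟩⟩, ?_⟩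
    rintro l ⟨hlQ, hvl⟩
    rw [Set.mem_iUnion] at hlQ
    obtain ⟨j, m', hm', rfl⟩ := hlQ
    obtain ⟨w, hwm', hwv⟩ := List.mem_map.mp hvl
    have hvj : v ∈ W j := hwv ▸ w.2
    obtain rfl : j = i := huniq hvj hvi
    have hw : w = ⟨v, hvi⟩ := Subtype.ext hwv
    rw [hmu m' ⟨hm', hw ▸ hwm'⟩]
  · rintro l hl
    rw [Set.mem_iUnion] at hl
    obtain ⟨i, m, hm, rfl⟩ := hl
    obtain ⟨s, ⟨hsm, hsS⟩, hsu⟩ := (hP i).2 m hm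
    refine ⟨s.1, ⟨List.mem_map.mpr ⟨s, hsm, rfl⟩, hsS⟩, ?_⟩
    rintro t ⟨htl, htS⟩
    obtain ⟨w, hwm, rfl⟩ := List.mem_map.mp htl
    rw [hsu w ⟨hwm, htS⟩]
end

section
/- If a digraph D can be partitioned into k ≥ 2 induced subdigraphs H_1, ..., H_k such that each H_i satisfies the BE-property and α(D) = α(H_1) + ... + α(H_k), then D satisfies the BE-property. -/
open Relation

variable {V : Type*}

lemma stable_ncard_le_alphaNum' {V : Type*} [Finite V] {A : V → V → Prop} {T : Set V}
    (hT : IsStable A T) : T.ncard ≤ alphaNum A := by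
  apply le_csSup
  · refine ⟨Nat.card V, ?_⟩
    rintro n ⟨S, _, rfl⟩
    simpa [Set.ncard_univ] using Set.ncard_le_ncard (Set.subset_univ S) Set.finite_univ
  · exact ⟨T, hT, rfl⟩

lemma maxStable_ncard' {V : Type*} [Finite V] {A : V → V → Prop} {S : Set V}
    (hS : IsMaxStable A S) : alphaNum A = S.ncard := by
  refine le_antisymm ?_ (stable_ncard_le_alphaNum' hS.1)
  refine csSup_le ⟨S.ncard, S, hS.1, rfl⟩ ?_
  rintro n ⟨T, hT, rfl⟩
  exact hS.2 T hT

lemma ncard_sum_inter' {V : Type*} [Finite V] {k : ℕ} (W : Fin k → Set V)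
    (hdisj : Pairwise fun i j => Disjoint (W i) (W j))
    (hcover : (⋃ i, W i) = Set.univ) (S : Set V) :
    S.ncard = ∑ i, (S ∩ W i).ncard := by
  have key : ∀ s : Finset (Fin k),
      (⋃ i ∈ s, S ∩ W i).ncard = ∑ i ∈ s, (S ∩ W i).ncard := by
    intro s
    induction s using Finset.induction_on with
    | empty => simp
    | insert _ _ hx ih =>
      rename_i a s
      rw [Finset.sum_insert hx, ← ih, Finset.set_biUnion_insert, Set.ncard_union_eq]
      apply Set.disjoint_iUnion₂_right.2
      intro i hi
      exact Set.disjoint_of_subset Set.inter_subset_right Set.inter_subset_right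
        (hdisj (fun h => hx (h ▸ hi)))
  have hS : S = ⋃ i ∈ (Finset.univ : Finset (Fin k)), S ∩ W i := by
    simp only [Finset.mem_univ, Set.iUnion_true, ← Set.inter_iUnion, hcover,
      Set.inter_univ]
  nth_rewrite 1 [hS]
  rw [key]

/-- If `D` is partitioned into `k ≥ 2` induced subdigraphs each satisfying the
BE-property, with `α(D)` equal to the sum of their stability numbers, then `D` satisfies
the BE-property. -/
theorem partition_BEProperty {V : Type*} [Finite V] (A : V → V → Prop)
    (hirr : ∀ v, ¬ A v v) (k : ℕ) (hk : 2 ≤ k) (W : Fin k → Set V)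
    (hne : ∀ i, (W i).Nonempty)
    (hdisj : Pairwise fun i j => Disjoint (W i) (W j))
    (hcover : (⋃ i, W i) = Set.univ)
    (hprop : ∀ i, BEProperty (fun a b : W i => A a.1 b.1))
    (halpha : alphaNum A = ∑ i, alphaNum (fun a b : W i => A a.1 b.1)) :
    BEProperty A := by
  classical
  intro S hS
  have idx : ∀ v : V, ∃ i, v ∈ W i := by
    intro v
    have : v ∈ ⋃ i, W i := hcover ▸ Set.mem_univ v
    simpa using this
  set Si : ∀ i : Fin k, Set (W i) := fun i => {x | x.1 ∈ S} with hSidef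
  have hSi_stable : ∀ i, IsStable (fun a b : W i => A a.1 b.1) (Si i) := by
    intro i x hx y hy hxy hadj
    exact hS.1 x.1 hx y.1 hy (fun h => hxy (Subtype.ext h)) hadj
  have himg : ∀ i, Subtype.val '' (Si i) = S ∩ W i := by
    intro i
    ext v
    simp only [Set.mem_image, Set.mem_inter_iff, Subtype.exists, hSidef,
      Set.mem_setOf_eq]
    constructor
    · rintro ⟨a, ha, haS, rfl⟩; exact ⟨haS, ha⟩
    · rintro ⟨hvS, hvW⟩; exact ⟨v, hvW, hvS, rfl⟩
  have hcard : ∀ i, (Si i).ncard = (S ∩ W i).ncard := fun i => by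
    rw [← himg i, Set.ncard_image_of_injective _ Subtype.val_injective]
  have hsum : ∑ i, (Si i).ncard = S.ncard := by
    rw [ncard_sum_inter' W hdisj hcover S]
    exact Finset.sum_congr rfl fun i _ => hcard i
  have hle : ∀ i ∈ Finset.univ, (Si i).ncard ≤ alphaNum (fun a b : W i => A a.1 b.1) :=
    fun i _ => stable_ncard_le_alphaNum' (hSi_stable i)
  have hsumeq : ∑ i, (Si i).ncard = ∑ i, alphaNum (fun a b : W i => A a.1 b.1) := by
    rw [hsum, ← maxStable_ncard' hS, halpha]
  have heq : ∀ i, (Si i).ncard = alphaNum (fun a b : W i => A a.1 b.1) :=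
    fun i => (Finset.sum_eq_sum_iff_of_le hle).1 hsumeq i (Finset.mem_univ i)
  have hmax : ∀ i, IsMaxStable (fun a b : W i => A a.1 b.1) (Si i) := by
    intro i
    refine ⟨hSi_stable i, fun T hT => ?_⟩
    rw [heq i]
    exact stable_ncard_le_alphaNum' hT
  choose P hP using fun i => hprop i (Si i) (hmax i)
  refine ⟨⋃ i, (List.map (Subtype.val : W i → V)) '' (P i), ?_⟩
  have hmem : ∀ l ∈ ⋃ i, (List.map (Subtype.val : W i → V)) '' (P i),
      ∃ i, ∃ m ∈ P i, l = m.map Subtype.val := by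
    intro l hl
    rw [Set.mem_iUnion] at hl
    obtain ⟨i, m, hm, rfl⟩ := hl
    exact ⟨i, m, hm, rfl⟩
  refine ⟨⟨⟨?_, ?_⟩, ?_⟩, ?_⟩
  · -- each list is a dipath
    intro l hl
    obtain ⟨i, m, hm, rfl⟩ := hmem l hl
    obtain ⟨hne', hnd, hch⟩ := (hP i).1.1.1 m hm
    refine ⟨fun h => hne' (List.map_eq_nil_iff.1 h), hnd.map Subtype.val_injective, ?_⟩
    rw [List.Chain', List.isChain_map]
    exact hch
  · -- unique path through each vertex
    intro v
    obtain ⟨i, hvi⟩ := idx v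
    obtain ⟨m, ⟨hmP, hvm⟩, humq⟩ := (hP i).1.1.2 ⟨v, hvi⟩
    refine ⟨m.map Subtype.val,
      ⟨Set.mem_iUnion.2 ⟨i, Set.mem_image_of_mem _ hmP⟩, List.mem_map_of_mem hvm⟩, ?_⟩
    rintro l ⟨hlQ, hvl⟩
    obtain ⟨j, m', hm'P, rfl⟩ := hmem l hlQ
    obtain ⟨x, hxm, hxv⟩ := List.mem_map.1 hvl
    have hji : j = i := by
      by_contra hji
      exact Set.disjoint_left.1 (hdisj hji) (hxv ▸ x.2) hvi
    subst hji
    have hx : x = ⟨v, hvi⟩ := Subtype.ext hxv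
    rw [humq m' ⟨hm'P, hx ▸ hxm⟩]
  · -- exactly one vertex of S per path
    intro l hl
    obtain ⟨i, m, hm, rfl⟩ := hmem l hl
    obtain ⟨x, ⟨hxm, hxS⟩, hxu⟩ := (hP i).1.2 m hm
    refine ⟨x.1, ⟨List.mem_map_of_mem hxm, hxS⟩, ?_⟩
    rintro s ⟨hsl, hsS⟩
    obtain ⟨y, hym, rfl⟩ := List.mem_map.1 hsl
    rw [hxu y ⟨hym, hsS⟩]
  · -- the vertex of S is an endpoint
    intro l hl s hsl hsS
    obtain ⟨i, m, hm, rfl⟩ := hmem l hl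
    obtain ⟨y, hym, rfl⟩ := List.mem_map.1 hsl
    rcases (hP i).2 m hm y hym hsS with h | h
    · left; rw [List.head?_map, h]; rfl
    · right; rw [List.getLast?_map, h]; rfl
end

section
/- If B is a clique cut of a graph G, then G can be partitioned into two proper induced subgraphs H_1 and H_2 such that α(G) = α(H_1) + α(H_2); moreover, every edge uv of G with u ∈ V(H_1) and v ∈ V(H_2) satisfies {u,v} ∩ B ≠ ∅. -/
open Relation

variable {V : Type*}

section Helpers

variable [Finite V] (G : SimpleGraph V)
set_option linter.unusedSectionVars false

def stab (G : SimpleGraph V) (S : Set V) : Prop := ∀ u ∈ S, ∀ v ∈ S, ¬ G.Adj u v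

lemma stab_mono {G : SimpleGraph V} {S T : Set V} (h : stab G S) (hts : T ⊆ S) : stab G T :=
  fun u hu v hv => h u (hts hu) v (hts hv)

noncomputable def aOn (G : SimpleGraph V) (W : Set V) : ℕ :=
  sSup {n | ∃ S : Set V, S ⊆ W ∧ stab G S ∧ S.ncard = n}

lemma aOn_bdd (W : Set V) :
    BddAbove {n | ∃ S : Set V, S ⊆ W ∧ stab G S ∧ S.ncard = n} :=
  ⟨Nat.card V, by
    rintro n ⟨S, -, -, rfl⟩
    simpa [Set.ncard_univ] using Set.ncard_le_ncard (Set.subset_univ S) Set.finite_univ⟩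

lemma le_aOn {W S : Set V} (hS : S ⊆ W) (hst : stab G S) : S.ncard ≤ aOn G W :=
  le_csSup (aOn_bdd G W) ⟨S, hS, hst, rfl⟩

lemma exists_aOn (W : Set V) : ∃ S : Set V, S ⊆ W ∧ stab G S ∧ S.ncard = aOn G W := by
  have hne : ({n | ∃ S : Set V, S ⊆ W ∧ stab G S ∧ S.ncard = n} : Set ℕ).Nonempty :=
    ⟨0, ∅, Set.empty_subset W, fun u hu => absurd hu (Set.notMem_empty u), Set.ncard_empty V⟩
  exact Nat.sSup_mem hne (aOn_bdd G W)

lemma aOn_mono {W1 W2 : Set V} (h : W1 ⊆ W2) : aOn G W1 ≤ aOn G W2 := by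
  obtain ⟨S, hSW, hst, hc⟩ := exists_aOn G W1
  rw [← hc]; exact le_aOn G (hSW.trans h) hst

lemma alphaNum_eq_aOn (W : Set V) :
    alphaNum (fun a b : W => G.Adj a.1 b.1) = aOn G W := by
  unfold alphaNum aOn
  congr 1
  ext n
  constructor
  · rintro ⟨S, hS, rfl⟩
    refine ⟨Subtype.val '' S, by rintro x ⟨a, -, rfl⟩; exact a.2, ?_,
      (Set.ncard_image_of_injective S Subtype.val_injective).symm ▸ rfl⟩
    rintro u ⟨a, ha, rfl⟩ v ⟨b, hb, rfl⟩ hadj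
    rcases eq_or_ne a b with rfl | hne
    · exact G.loopless.irrefl _ hadj
    · exact hS a ha b hb hne (Or.inl hadj)
  · rintro ⟨S, hSW, hst, rfl⟩
    refine ⟨Subtype.val ⁻¹' S, ?_, ?_⟩
    · rintro u hu v hv hne (h' | h')
      · exact hst u.1 hu v.1 hv h'
      · exact hst v.1 hv u.1 hu h'
    · have himg : Subtype.val '' (Subtype.val ⁻¹' S : Set W) = S := by
        rw [Subtype.image_preimage_coe]
        exact Set.inter_eq_self_of_subset_right hSW
      rw [← Set.ncard_image_of_injective (Subtype.val ⁻¹' S : Set W) Subtype.val_injective, himg]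

lemma alphaNum_top : alphaNum G.Adj = aOn G Set.univ := by
  unfold alphaNum aOn
  congr 1
  ext n
  constructor
  · rintro ⟨S, hS, rfl⟩
    refine ⟨S, Set.subset_univ S, ?_, rfl⟩
    intro u hu v hv hadj
    rcases eq_or_ne u v with rfl | hne
    · exact G.loopless.irrefl u hadj
    · exact hS u hu v hv hne (Or.inl hadj)
  · rintro ⟨S, -, hS, rfl⟩
    refine ⟨S, ?_, rfl⟩
    rintro u hu v hv hne (h' | h')
    · exact hS u hu v hv h'
    · exact hS v hv u hu h'

lemma aOn_union_le (W1 W2 : Set V) : aOn G (W1 ∪ W2) ≤ aOn G W1 + aOn G W2 := by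
  obtain ⟨S, hSW, hst, hcard⟩ := exists_aOn G (W1 ∪ W2)
  rw [← hcard]
  have hS : S = (S ∩ W1) ∪ (S ∩ W2) := by
    rw [← Set.inter_union_distrib_left]
    exact (Set.inter_eq_self_of_subset_left hSW).symm
  calc S.ncard ≤ (S ∩ W1).ncard + (S ∩ W2).ncard := by
        nth_rewrite 1 [hS]; exact Set.ncard_union_le _ _
    _ ≤ aOn G W1 + aOn G W2 :=
        add_le_add (le_aOn G Set.inter_subset_right (stab_mono hst Set.inter_subset_left))
          (le_aOn G Set.inter_subset_right (stab_mono hst Set.inter_subset_left))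

lemma aOn_union_ge {W1 W2 : Set V} (hd : Disjoint W1 W2)
    (hnc : ∀ a ∈ W1, ∀ b ∈ W2, ¬ G.Adj a b) :
    aOn G W1 + aOn G W2 ≤ aOn G (W1 ∪ W2) := by
  obtain ⟨S1, h1W, h1st, h1c⟩ := exists_aOn G W1
  obtain ⟨S2, h2W, h2st, h2c⟩ := exists_aOn G W2
  have hstu : stab G (S1 ∪ S2) := by
    rintro u (hu | hu) v (hv | hv) hadj
    · exact h1st u hu v hv hadj
    · exact hnc u (h1W hu) v (h2W hv) hadj
    · exact hnc v (h1W hv) u (h2W hu) hadj.symm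
    · exact h2st u hu v hv hadj
  have := le_aOn G (Set.union_subset_union h1W h2W) hstu
  rwa [Set.ncard_union_eq (hd.mono h1W h2W), h1c, h2c] at this

lemma ncard_inter_clique_le_one {B : Set V} {S : Set V} (hclique : G.IsClique B)
    (hst : stab G S) : (S ∩ B).ncard ≤ 1 := by
  by_contra h
  push_neg at h
  obtain ⟨a, b, ha, hb, hne⟩ := (Set.one_lt_ncard_iff (Set.toFinite _)).mp h
  exact hst a ha.1 b hb.1 (hclique ha.2 hb.2 hne)

end Helpers



/-- If `B` is a clique cut of a graph `G` (or `G` is disconnected and `B` is any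
clique), then `G` splits into two proper induced subgraphs `H1, H2` with
`α(G) = α(H1) + α(H2)`, and every edge between `H1` and `H2` meets `B`. -/
theorem clique_cut_partition {V : Type*} [Finite V] (G : SimpleGraph V) (B : Set V)
    (hclique : G.IsClique B)
    (hcut : ¬ G.Preconnected ∨ ¬ (G.induce Bᶜ).Preconnected) :
    ∃ H1 H2 : Set V, H1.Nonempty ∧ H2.Nonempty ∧ Disjoint H1 H2 ∧
      H1 ∪ H2 = Set.univ ∧
      alphaNum G.Adj =
        alphaNum (fun a b : H1 => G.Adj a.1 b.1) +
          alphaNum (fun a b : H2 => G.Adj a.1 b.1) ∧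
      ∀ u v : V, G.Adj u v → u ∈ H1 → v ∈ H2 → u ∈ B ∨ v ∈ B := by
  classical
  rcases hcut with h | h
  · -- G disconnected
    rw [SimpleGraph.Preconnected] at h; push_neg at h
    obtain ⟨u, v, huv⟩ := h
    have hnc : ∀ a ∈ {w | G.Reachable u w}, ∀ b ∈ {w | G.Reachable u w}ᶜ, ¬ G.Adj a b := by
      intro a ha b hb hadj
      exact hb (SimpleGraph.Reachable.trans ha hadj.reachable)
    refine ⟨{w | G.Reachable u w}, {w | G.Reachable u w}ᶜ, ⟨u, SimpleGraph.Reachable.refl u⟩, ⟨v, huv⟩,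
      disjoint_compl_right, Set.union_compl_self _, ?_, ?_⟩
    · rw [alphaNum_top, alphaNum_eq_aOn, alphaNum_eq_aOn,
        ← Set.union_compl_self {w | G.Reachable u w}]
      exact le_antisymm (aOn_union_le G _ _) (aOn_union_ge G disjoint_compl_right hnc)
    · intro a b hadj ha hb
      exact (hnc a ha b hb hadj).elim
  · -- G - B disconnected
    rw [SimpleGraph.Preconnected] at h; push_neg at h
    obtain ⟨u, v, huv⟩ := h
    set C : Set V := {w | ∃ hw : w ∈ Bᶜ, (G.induce Bᶜ).Reachable u ⟨w, hw⟩} with hCdef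
    set D : Set V := Bᶜ \ C with hDdef
    have hCB : C ⊆ Bᶜ := by rintro w ⟨hw, -⟩; exact hw
    have huC : u.1 ∈ C := ⟨u.2, by rw [Subtype.coe_eta]⟩
    have hvD : v.1 ∈ D := by
      refine ⟨v.2, ?_⟩
      rintro ⟨hv', hr⟩
      exact huv (by rwa [Subtype.coe_eta] at hr)
    have hCclosed : ∀ a ∈ C, ∀ b ∈ Bᶜ, G.Adj a b → b ∈ C := by
      rintro a ⟨ha, hra⟩ b hb hadj
      exact ⟨hb, hra.trans (SimpleGraph.Adj.reachable (by simpa using hadj :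
        (G.induce Bᶜ).Adj ⟨a, ha⟩ ⟨b, hb⟩))⟩
    have noCD : ∀ a ∈ C, ∀ b ∈ D, ¬ G.Adj a b :=
      fun a ha b hb hadj => hb.2 (hCclosed a ha b hb.1 hadj)
    have hCD_disj : Disjoint C D := Set.disjoint_sdiff_right
    have hCDunion : C ∪ D = Bᶜ := Set.union_diff_cancel hCB
    have hground : aOn G C + aOn G D ≤ aOn G Set.univ :=
      le_trans (aOn_union_ge G hCD_disj noCD) (aOn_mono G (Set.subset_univ _))
    by_cases hcase : aOn G Set.univ ≤ aOn G C + aOn G D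
    · -- Case II : α = αC + αD
      set B1 : Set V := {b | b ∈ B ∧ aOn G (insert b C) ≤ aOn G C} with hB1def
      set B2 : Set V := B \ B1 with hB2def
      have hB2prop : ∀ b ∈ B2, aOn G (insert b D) ≤ aOn G D := by
        rintro b ⟨hbB, hbn⟩
        have hbn' : aOn G C < aOn G (insert b C) := by
          by_contra hle
          exact hbn ⟨hbB, by omega⟩
        by_contra hbd
        push_neg at hbd
        obtain ⟨T, hTW, hTst, hTc⟩ := exists_aOn G (insert b C)
        obtain ⟨T', hTW', hTst', hTc'⟩ := exists_aOn G (insert b D)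
        have hbT : b ∈ T := by
          by_contra hb
          have hTC : T ⊆ C := fun x hx => ((hTW hx).resolve_left (fun hxb => hb (hxb ▸ hx)))
          have := le_aOn G hTC hTst
          omega
        have hbT' : b ∈ T' := by
          by_contra hb
          have hTD : T' ⊆ D := fun x hx => ((hTW' hx).resolve_left (fun hxb => hb (hxb ▸ hx)))
          have := le_aOn G hTD hTst'
          omega
        have hstU : stab G (T ∪ T') := by
          rintro x (hx | hx) y (hy | hy) hadj
          · exact hTst x hx y hy hadj
          · rcases hTW hx with rfl | hxC
            · exact hTst' x hbT' y hy hadj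
            · rcases hTW' hy with rfl | hyD
              · exact hTst x hx y hbT hadj
              · exact noCD x hxC y hyD hadj
          · rcases hTW' hx with rfl | hxD
            · exact hTst x hbT y hy hadj
            · rcases hTW hy with rfl | hyC
              · exact hTst' x hx y hbT' hadj
              · exact noCD y hyC x hxD hadj.symm
          · exact hTst' x hx y hy hadj
        have hUeq : T ∪ T' = insert b ((T \ {b}) ∪ (T' \ {b})) := by
          ext x
          simp only [Set.mem_union, Set.mem_insert_iff, Set.mem_diff, Set.mem_singleton_iff]
          constructor
          · rintro (hx | hx)
            · rcases eq_or_ne x b with rfl | hne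
              · exact Or.inl rfl
              · exact Or.inr (Or.inl ⟨hx, hne⟩)
            · rcases eq_or_ne x b with rfl | hne
              · exact Or.inl rfl
              · exact Or.inr (Or.inr ⟨hx, hne⟩)
          · rintro (rfl | ⟨hx, -⟩ | ⟨hx, -⟩)
            · exact Or.inl hbT
            · exact Or.inl hx
            · exact Or.inr hx
        have hd1 : Disjoint (T \ {b}) (T' \ {b}) := by
          have h1 : T \ {b} ⊆ C := fun x hx => (hTW hx.1).resolve_left hx.2
          have h2 : T' \ {b} ⊆ D := fun x hx => (hTW' hx.1).resolve_left hx.2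
          exact hCD_disj.mono h1 h2
        have hbmem : b ∉ (T \ {b}) ∪ (T' \ {b}) := by simp
        have he1 : (T \ {b}).ncard = T.ncard - 1 := Set.ncard_diff_singleton_of_mem hbT
        have he2 : (T' \ {b}).ncard = T'.ncard - 1 := Set.ncard_diff_singleton_of_mem hbT'
        have hfinal : (T ∪ T').ncard ≤ aOn G Set.univ := le_aOn G (Set.subset_univ _) hstU
        rw [hUeq, Set.ncard_insert_of_notMem hbmem, Set.ncard_union_eq hd1] at hfinal
        omega
      have hB1prop : ∀ b ∈ B1, aOn G (insert b C) ≤ aOn G C := fun b hb => hb.2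
      -- α(H1) = αC
      have hH1le : aOn G (C ∪ B1) ≤ aOn G C := by
        obtain ⟨T, hTW, hTst, hTc⟩ := exists_aOn G (C ∪ B1)
        rw [← hTc]
        by_cases hex : ∃ b ∈ T, b ∈ B1
        · obtain ⟨b, hbT, hbB1⟩ := hex
          have hsub : T ⊆ insert b C := by
            intro x hx
            rcases hTW hx with hc | hb1
            · exact Set.mem_insert_of_mem _ hc
            · rcases eq_or_ne x b with rfl | hne
              · exact Set.mem_insert _ _
              · exact absurd (hclique hb1.1 hbB1.1 hne) (hTst x hx b hbT)
          exact (le_aOn G hsub hTst).trans (hB1prop b hbB1)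
        · push_neg at hex
          exact le_aOn G (fun x hx => (hTW hx).resolve_right (hex x hx)) hTst
      have hH2le : aOn G (D ∪ B2) ≤ aOn G D := by
        obtain ⟨T, hTW, hTst, hTc⟩ := exists_aOn G (D ∪ B2)
        rw [← hTc]
        by_cases hex : ∃ b ∈ T, b ∈ B2
        · obtain ⟨b, hbT, hbB2⟩ := hex
          have hsub : T ⊆ insert b D := by
            intro x hx
            rcases hTW hx with hc | hb2
            · exact Set.mem_insert_of_mem _ hc
            · rcases eq_or_ne x b with rfl | hne
              · exact Set.mem_insert _ _
              · exact absurd (hclique hb2.1 hbB2.1 hne) (hTst x hx b hbT)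
          exact (le_aOn G hsub hTst).trans (hB2prop b hbB2)
        · push_neg at hex
          exact le_aOn G (fun x hx => (hTW hx).resolve_right (hex x hx)) hTst
      have hH1 : aOn G (C ∪ B1) = aOn G C :=
        le_antisymm hH1le (aOn_mono G Set.subset_union_left)
      have hH2 : aOn G (D ∪ B2) = aOn G D :=
        le_antisymm hH2le (aOn_mono G Set.subset_union_left)
      have hunion : (C ∪ B1) ∪ (D ∪ B2) = Set.univ := by
        apply Set.eq_univ_of_forall
        intro x
        simp only [Set.mem_union]
        by_cases hxB : x ∈ B
        · by_cases hx1 : x ∈ B1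
          · exact Or.inl (Or.inr hx1)
          · exact Or.inr (Or.inr ⟨hxB, hx1⟩)
        · by_cases hxC : x ∈ C
          · exact Or.inl (Or.inl hxC)
          · exact Or.inr (Or.inl ⟨hxB, hxC⟩)
      have hdisj : Disjoint (C ∪ B1) (D ∪ B2) := by
        rw [Set.disjoint_union_left]
        constructor
        · rw [Set.disjoint_union_right]
          exact ⟨hCD_disj, Set.disjoint_left.mpr (fun x hxC hxB2 => (hCB hxC) hxB2.1)⟩
        · rw [Set.disjoint_union_right]
          exact ⟨Set.disjoint_left.mpr (fun x hx1 hxD => hxD.1 hx1.1),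
            Set.disjoint_sdiff_right⟩
      refine ⟨C ∪ B1, D ∪ B2, ⟨u.1, Or.inl huC⟩, ⟨v.1, Or.inl hvD⟩, hdisj, hunion, ?_, ?_⟩
      · rw [alphaNum_top, alphaNum_eq_aOn, alphaNum_eq_aOn, hH1, hH2]
        refine le_antisymm hcase hground
      · rintro a b hadj (haC | haB1) (hbD | hbB2)
        · exact absurd hadj (noCD a haC b hbD)
        · exact Or.inr hbB2.1
        · exact Or.inl haB1.1
        · exact Or.inl haB1.1
    · -- Case I : α = αC + αD + 1
      push_neg at hcase
      have hH1le : aOn G (C ∪ B) ≤ aOn G C + 1 := by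
        obtain ⟨T, hTW, hTst, hTc⟩ := exists_aOn G (C ∪ B)
        rw [← hTc]
        have hT : T = (T ∩ C) ∪ (T ∩ B) := by
          rw [← Set.inter_union_distrib_left]
          exact (Set.inter_eq_self_of_subset_left hTW).symm
        calc T.ncard ≤ (T ∩ C).ncard + (T ∩ B).ncard := by
              nth_rewrite 1 [hT]; exact Set.ncard_union_le _ _
          _ ≤ aOn G C + 1 :=
              add_le_add (le_aOn G Set.inter_subset_right (stab_mono hTst Set.inter_subset_left))
                (ncard_inter_clique_le_one G hclique hTst)
      have hunion : (C ∪ B) ∪ D = Set.univ := by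
        apply Set.eq_univ_of_forall
        intro x
        simp only [Set.mem_union]
        by_cases hxB : x ∈ B
        · exact Or.inl (Or.inr hxB)
        · by_cases hxC : x ∈ C
          · exact Or.inl (Or.inl hxC)
          · exact Or.inr ⟨hxB, hxC⟩
      have hdisj : Disjoint (C ∪ B) D := by
        rw [Set.disjoint_union_left]
        exact ⟨hCD_disj, Set.disjoint_left.mpr (fun x hxB hxD => hxD.1 hxB)⟩
      refine ⟨C ∪ B, D, ⟨u.1, Or.inl huC⟩, ⟨v.1, hvD⟩, hdisj, hunion, ?_, ?_⟩
      · rw [alphaNum_top, alphaNum_eq_aOn, alphaNum_eq_aOn]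
        have h1 : aOn G Set.univ ≤ aOn G (C ∪ B) + aOn G D := by
          conv_lhs => rw [← hunion]
          exact aOn_union_le G _ _
        have h2 : aOn G (C ∪ B) + aOn G D ≤ aOn G Set.univ := by
          have h3 : aOn G C ≤ aOn G (C ∪ B) := aOn_mono G Set.subset_union_left
          omega
        omega
      · rintro a b hadj (haC | haB) hbD
        · exact absurd hadj (noCD a haC b hbD)
        · exact Or.inl haB
end

section
/- If a graph G contains a proper induced cycle C containing at most two vertices of degree (in G) greater than two, then G can be partitioned into two proper induced subgraphs H_1 and H_2 such that α(G) = α(H_1) + α(H_2). -/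
open Relation

variable {V : Type*}

set_option linter.unusedSectionVars false
set_option linter.unusedVariables false
section API
variable [Finite V] {A : V → V → Prop}


lemma alpha_bdd : BddAbove {n | ∃ S : Set V, IsStable A S ∧ S.ncard = n} := by
  refine ⟨Nat.card V, ?_⟩
  rintro m ⟨S, -, rfl⟩
  simpa [Set.ncard_univ] using Set.ncard_le_ncard (Set.subset_univ S) Set.finite_univ

lemma stable_le_alpha {S : Set V} (h : IsStable A S) : S.ncard ≤ alphaNum A :=
  le_csSup alpha_bdd ⟨S, h, rfl⟩

lemma alpha_set_nonempty : {n | ∃ S : Set V, IsStable A S ∧ S.ncard = n}.Nonempty :=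
  ⟨0, ∅, fun u hu => absurd hu (Set.notMem_empty u), by simp⟩

lemma exists_max_stable : ∃ S : Set V, IsStable A S ∧ S.ncard = alphaNum A :=
  Nat.sSup_mem alpha_set_nonempty alpha_bdd

lemma alpha_le {m : ℕ} (h : ∀ S : Set V, IsStable A S → S.ncard ≤ m) : alphaNum A ≤ m :=
  csSup_le alpha_set_nonempty (by rintro k ⟨S, hS, rfl⟩; exact h S hS)

end API

section Graph
variable [Finite V] {G : SimpleGraph V}

/-- stability w.r.t. a simple graph, without the distinctness side condition -/
def GStable (G : SimpleGraph V) (S : Set V) : Prop := ∀ u ∈ S, ∀ v ∈ S, ¬ G.Adj u v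

lemma isStable_iff_gstable {S : Set V} : IsStable G.Adj S ↔ GStable G S := by
  constructor
  · intro h u hu v hv hadj
    exact h u hu v hv (G.ne_of_adj hadj) (Or.inl hadj)
  · intro h u _ v _ _ hd
    rcases hd with h1 | h1
    · exact h u ‹_› v ‹_› h1
    · exact h v ‹_› u ‹_› h1

lemma isStable_sub_iff {H : Set V} {S : Set ↥H} :
    IsStable (fun a b : H => G.Adj a.1 b.1) S ↔ ∀ u ∈ S, ∀ v ∈ S, ¬ G.Adj u.1 v.1 := by
  constructor
  · intro h u hu v hv hadj
    have hne : u ≠ v := fun he => G.ne_of_adj hadj (by rw [he])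
    exact h u hu v hv hne (Or.inl hadj)
  · intro h u _ v _ _ hd
    rcases hd with h1 | h1
    · exact h u ‹_› v ‹_› h1
    · exact h v ‹_› u ‹_› h1

/-- lower bound for subgraph alpha -/
lemma le_alpha_sub {H T : Set V} (hTH : T ⊆ H) (hT : GStable G T) :
    T.ncard ≤ alphaNum (fun a b : H => G.Adj a.1 b.1) := by
  classical
  set S : Set ↥H := {a : ↥H | a.1 ∈ T} with hS
  have himg : Subtype.val '' S = T := by
    ext v
    constructor
    · rintro ⟨a, ha, rfl⟩; exact ha
    · intro hv; exact ⟨⟨v, hTH hv⟩, hv, rfl⟩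
  have hcard : S.ncard = T.ncard := by
    rw [← himg]; exact (Set.ncard_image_of_injective S Subtype.val_injective).symm
  have hstab : IsStable (fun a b : H => G.Adj a.1 b.1) S := by
    rw [isStable_sub_iff]
    intro u hu v hv
    exact hT u.1 hu v.1 hv
  calc T.ncard = S.ncard := hcard.symm
    _ ≤ _ := stable_le_alpha hstab

/-- the subgraph alpha is attained by a stable subset of H -/
lemma exists_alpha_sub (H : Set V) :
    ∃ T : Set V, T ⊆ H ∧ GStable G T ∧ T.ncard = alphaNum (fun a b : H => G.Adj a.1 b.1) := by
  obtain ⟨S, hS, hcard⟩ := exists_max_stable (A := fun a b : H => G.Adj a.1 b.1)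
  refine ⟨Subtype.val '' S, ?_, ?_, ?_⟩
  · rintro v ⟨a, _, rfl⟩; exact a.2
  · rintro v ⟨a, ha, rfl⟩ w ⟨b, hb, rfl⟩
    exact (isStable_sub_iff.1 hS) a ha b hb
  · rw [Set.ncard_image_of_injective S Subtype.val_injective, hcard]

lemma alpha_sub_le {H : Set V} {m : ℕ}
    (h : ∀ T : Set V, T ⊆ H → GStable G T → T.ncard ≤ m) :
    alphaNum (fun a b : H => G.Adj a.1 b.1) ≤ m := by
  obtain ⟨T, hTH, hT, hcard⟩ := exists_alpha_sub (G := G) H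
  rw [← hcard]; exact h T hTH hT

lemma gstable_le_alpha {S : Set V} (h : GStable G S) : S.ncard ≤ alphaNum G.Adj :=
  stable_le_alpha (isStable_iff_gstable.2 h)

lemma alpha_split_le {H1 H2 : Set V} (hcover : H1 ∪ H2 = Set.univ) :
    alphaNum G.Adj ≤ alphaNum (fun a b : H1 => G.Adj a.1 b.1)
      + alphaNum (fun a b : H2 => G.Adj a.1 b.1) := by
  obtain ⟨S, hS, hcard⟩ := exists_max_stable (A := G.Adj)
  rw [← hcard]
  have hgs : GStable G S := by
    intro u hu v hv
    exact isStable_iff_gstable.1 hS u hu v hv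
  have hsplit : S = (S ∩ H1) ∪ (S ∩ H2) := by
    rw [← Set.inter_union_distrib_left, hcover, Set.inter_univ]
  calc S.ncard ≤ (S ∩ H1).ncard + (S ∩ H2).ncard := by
        conv_lhs => rw [hsplit]
        exact Set.ncard_union_le _ _
    _ ≤ _ := add_le_add
        (le_alpha_sub Set.inter_subset_right (fun u hu v hv => hgs u hu.1 v hv.1))
        (le_alpha_sub Set.inter_subset_right (fun u hu v hv => hgs u hu.1 v hv.1))

lemma gstable_union {S T : Set V} (hS : GStable G S) (hT : GStable G T)
    (hST : ∀ s ∈ S, ∀ t ∈ T, ¬ G.Adj s t) : GStable G (S ∪ T) := by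
  rintro u (hu | hu) v (hv | hv)
  · exact hS u hu v hv
  · exact hST u hu v hv
  · intro h; exact hST v hv u hu h.symm
  · exact hT u hu v hv

end Graph

section Cycle
variable [Finite V] {G : SimpleGraph V} {n : ℕ} {x : ZMod n → V}

lemma cast_inj_lt (hn : 3 ≤ n) {k l : ℕ} (hk : k < n) (hl : l < n) :
    (k : ZMod n) = l ↔ k = l := by
  rw [ZMod.natCast_eq_natCast_iff, Nat.ModEq, Nat.mod_eq_of_lt hk, Nat.mod_eq_of_lt hl]

lemma adj_nat (hn : 3 ≤ n)
    (hadj : ∀ i j, G.Adj (x i) (x j) ↔ (j = i + 1 ∨ i = j + 1))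
    {k l : ℕ} (hk : k < n) (hl : l < n) :
    G.Adj (x k) (x l) ↔ (l = k + 1 ∨ k = l + 1 ∨ (k = n - 1 ∧ l = 0) ∨ (l = n - 1 ∧ k = 0)) := by
  rw [hadj]
  have e1 : ((k : ZMod n) + 1) = ((k+1 : ℕ) : ZMod n) := by push_cast; ring
  have e2 : ((l : ZMod n) + 1) = ((l+1 : ℕ) : ZMod n) := by push_cast; ring
  have m1 : (k+1) % n = if k + 1 = n then 0 else k + 1 := by
    split
    · simp [*, Nat.mod_self]
    · exact Nat.mod_eq_of_lt (by omega)
  have m2 : (l+1) % n = if l + 1 = n then 0 else l + 1 := by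
    split
    · simp [*, Nat.mod_self]
    · exact Nat.mod_eq_of_lt (by omega)
  rw [e1, e2, ZMod.natCast_eq_natCast_iff, ZMod.natCast_eq_natCast_iff, Nat.ModEq, Nat.ModEq,
    Nat.mod_eq_of_lt hk, Nat.mod_eq_of_lt hl, m1, m2]
  split_ifs <;> omega

lemma htwo_ne_zero (hn : 3 ≤ n) : (2 : ZMod n) ≠ 0 := by
  intro h
  have h2 : ((2:ℕ) : ZMod n) = ((0:ℕ) : ZMod n) := by push_cast; exact h
  have := (cast_inj_lt hn (by omega : (2:ℕ) < n) (by omega : (0:ℕ) < n)).1 h2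
  omega

lemma nonbranch_nbrs (hn : 3 ≤ n) (hinj : Function.Injective x)
    (hadj : ∀ i j, G.Adj (x i) (x j) ↔ (j = i + 1 ∨ i = j + 1))
    {i : ZMod n} (hnb : ¬ 2 < (G.neighborSet (x i)).ncard)
    {v : V} (hv : G.Adj (x i) v) : v = x (i - 1) ∨ v = x (i + 1) := by
  by_contra hcon
  push_neg at hcon
  obtain ⟨hc1, hc2⟩ := hcon
  apply hnb
  have h1 : x (i - 1) ∈ G.neighborSet (x i) := by
    rw [SimpleGraph.mem_neighborSet, hadj]
    exact Or.inr (by ring)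
  have h2 : x (i + 1) ∈ G.neighborSet (x i) := by
    rw [SimpleGraph.mem_neighborSet, hadj]
    exact Or.inl rfl
  have h3 : v ∈ G.neighborSet (x i) := hv
  have hne : x (i - 1) ≠ x (i + 1) := by
    intro h
    have h' := hinj h
    have h2 : (2 : ZMod n) = 0 := by linear_combination -h'
    exact htwo_ne_zero hn h2
  have hsub : ({x (i-1), x (i+1), v} : Set V) ⊆ G.neighborSet (x i) := by
    intro w hw
    rcases hw with rfl | rfl | rfl
    · exact h1
    · exact h2
    · exact h3
  have hcard : ({x (i-1), x (i+1), v} : Set V).ncard = 3 := by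
    rw [Set.ncard_insert_of_notMem (by simp [hne, Ne.symm hc1]),
      Set.ncard_insert_of_notMem (by simp [Ne.symm hc2]), Set.ncard_singleton]
  calc 2 < 3 := by omega
    _ = _ := hcard.symm
    _ ≤ _ := Set.ncard_le_ncard hsub (Set.toFinite _)

lemma stable_of_indices (hn : 3 ≤ n) (hinj : Function.Injective x)
    (hadj : ∀ i j, G.Adj (x i) (x j) ↔ (j = i + 1 ∨ i = j + 1))
    (F : Set ℕ) (hFlt : ∀ k ∈ F, k < n)
    (hcons : ∀ k ∈ F, ∀ l ∈ F, ¬ (l = k + 1 ∨ (k = n - 1 ∧ l = 0))) :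
    GStable G (x '' (Nat.cast '' F)) := by
  rintro u ⟨i, ⟨k, hk, rfl⟩, rfl⟩ v ⟨j, ⟨l, hl, rfl⟩, rfl⟩ hadj'
  rw [adj_nat hn hadj (hFlt k hk) (hFlt l hl)] at hadj'
  rcases hadj' with h | h | h | h
  · exact hcons k hk l hl (Or.inl h)
  · exact hcons l hl k hk (Or.inl h)
  · exact hcons k hk l hl (Or.inr h)
  · exact hcons l hl k hk (Or.inr h)

lemma ncard_image_indices (hn : 3 ≤ n) (hinj : Function.Injective x)
    (F : Set ℕ) (hFlt : ∀ k ∈ F, k < n) :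
    (x '' (Nat.cast '' F)).ncard = F.ncard := by
  rw [Set.ncard_image_of_injective _ hinj]
  apply Set.ncard_image_of_injOn
  intro k hk l hl h
  exact (cast_inj_lt hn (hFlt k hk) (hFlt l hl)).1 h

lemma cycle_stable_bound (hn : 3 ≤ n) (hinj : Function.Injective x)
    (hadj : ∀ i j, G.Adj (x i) (x j) ↔ (j = i + 1 ∨ i = j + 1))
    {T : Set V} (hTC : T ⊆ Set.range x) (hT : GStable G T) :
    T.ncard ≤ n / 2 := by
  classical
  haveI : NeZero n := ⟨by omega⟩
  set I : Set (ZMod n) := x ⁻¹' T with hI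
  have himg : x '' I = T := by
    apply Set.Subset.antisymm
    · rintro v ⟨i, hi, rfl⟩; exact hi
    · intro v hv
      obtain ⟨i, rfl⟩ := hTC hv
      exact ⟨i, hv, rfl⟩
  have hcardI : I.ncard = T.ncard := by rw [← himg, Set.ncard_image_of_injective _ hinj]
  set J : Set (ZMod n) := (fun i => i + 1) '' I with hJ
  have hdisj : Disjoint I J := by
    rw [Set.disjoint_right]
    rintro i ⟨j, hj, rfl⟩ hji
    have hadj2 : G.Adj (x j) (x (j + 1)) := (hadj j (j+1)).2 (Or.inl rfl)
    exact hT (x j) hj (x (j+1)) hji hadj2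
  have hcardJ : J.ncard = I.ncard := Set.ncard_image_of_injective _ (add_left_injective 1)
  have hun : I.ncard + J.ncard ≤ n := by
    rw [← Set.ncard_union_eq hdisj (Set.toFinite _) (Set.toFinite _)]
    have := Set.ncard_le_ncard (Set.subset_univ (I ∪ J)) Set.finite_univ
    rwa [Set.ncard_univ, Nat.card_zmod] at this
  omega

lemma arc_stable_bound (hn : 3 ≤ n) (hinj : Function.Injective x)
    (hadj : ∀ i j, G.Adj (x i) (x j) ↔ (j = i + 1 ∨ i = j + 1))
    {s e : ℕ} (hs : 1 ≤ s) (he : e + 1 < n)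
    {T : Set V} (hTC : T ⊆ x '' (Nat.cast '' Set.Icc s e)) (hT : GStable G T) :
    2 * T.ncard ≤ e + 2 - s := by
  classical
  set K : Set ℕ := {k | k ∈ Set.Icc s e ∧ x k ∈ T} with hK
  have hKlt : ∀ k ∈ K, k < n := fun k hk => by
    have := hk.1.2; omega
  have himg : x '' (Nat.cast '' K) = T := by
    apply Set.Subset.antisymm
    · rintro v ⟨i, ⟨k, hk, rfl⟩, rfl⟩; exact hk.2
    · intro v hv
      obtain ⟨i, ⟨k, hk, rfl⟩, rfl⟩ := hTC hv
      exact ⟨(k : ZMod n), ⟨k, ⟨hk, hv⟩, rfl⟩, rfl⟩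
  have hcardK : K.ncard = T.ncard := by rw [← himg, ncard_image_indices hn hinj K hKlt]
  set K1 : Set ℕ := (fun k => k + 1) '' K with hK1
  have hdisj : Disjoint K K1 := by
    rw [Set.disjoint_right]
    rintro k ⟨j, hj, rfl⟩ hjk
    have hjk' : j + 1 ∈ K := hjk
    have hadj2 : G.Adj (x ((j : ℕ) : ZMod n)) (x ((j + 1 : ℕ) : ZMod n)) := by
      rw [adj_nat hn hadj (hKlt j hj) (hKlt _ hjk')]
      exact Or.inl rfl
    exact hT _ hj.2 _ hjk'.2 hadj2
  have hcardK1 : K1.ncard = K.ncard := Set.ncard_image_of_injective _ (add_left_injective 1)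
  have hsub : K ∪ K1 ⊆ Set.Icc s (e + 1) := by
    rintro k (hk | ⟨j, hj, rfl⟩)
    · exact ⟨hk.1.1, by have := hk.1.2; omega⟩
    · show j + 1 ∈ Set.Icc s (e + 1)
      rw [Set.mem_Icc]
      have h1 := hj.1.1
      have h2 := hj.1.2
      omega
  have hle : K.ncard + K1.ncard ≤ e + 2 - s := by
    rw [← Set.ncard_union_eq hdisj (Set.toFinite _) (Set.toFinite _)]
    have h2 := Set.ncard_le_ncard hsub (Set.toFinite _)
    have h3 : (Set.Icc s (e+1)).ncard = e + 2 - s := by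
      rw [← Finset.coe_Icc, Set.ncard_coe_finset, Nat.card_Icc]
    omega
  omega

end Cycle

section ScenA
variable [Finite V]

lemma scenarioA (G : SimpleGraph V) {n : ℕ} (x : ZMod n → V)
    (hn : 3 ≤ n) (hinj : Function.Injective x)
    (hadj : ∀ i j, G.Adj (x i) (x j) ↔ (j = i + 1 ∨ i = j + 1))
    (hprop : Set.range x ≠ Set.univ)
    (F : Set ℕ) (hFlt : ∀ k ∈ F, k < n)
    (hcons : ∀ k ∈ F, ∀ l ∈ F, ¬ (l = k + 1 ∨ (k = n - 1 ∧ l = 0)))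
    (hFcard : F.ncard = n / 2)
    (hFnb : ∀ k ∈ F, ¬ 2 < (G.neighborSet (x k)).ncard) :
    ∃ H1 H2 : Set V, H1.Nonempty ∧ H2.Nonempty ∧ Disjoint H1 H2 ∧
      H1 ∪ H2 = Set.univ ∧
      alphaNum G.Adj =
        alphaNum (fun a b : H1 => G.Adj a.1 b.1) +
          alphaNum (fun a b : H2 => G.Adj a.1 b.1) := by
  classical
  haveI : NeZero n := ⟨by omega⟩
  set H1 : Set V := Set.range x with hH1
  set H2 : Set V := H1ᶜ with hH2
  set W : Set V := x '' (Nat.cast '' F) with hW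
  have hWsub : W ⊆ H1 := by rintro v ⟨i, -, rfl⟩; exact ⟨i, rfl⟩
  have hWstable : GStable G W := stable_of_indices hn hinj hadj F hFlt hcons
  have hWcard : W.ncard = n / 2 := by rw [hW, ncard_image_indices hn hinj F hFlt, hFcard]
  have hA1 : alphaNum (fun a b : H1 => G.Adj a.1 b.1) = n / 2 := by
    apply le_antisymm
    · exact alpha_sub_le (fun T hTH hT => cycle_stable_bound hn hinj hadj hTH hT)
    · rw [← hWcard]; exact le_alpha_sub hWsub hWstable
  obtain ⟨T, hTH2, hTstable, hTcard⟩ := exists_alpha_sub (G := G) H2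
  have hcross : ∀ w ∈ W, ∀ t ∈ T, ¬ G.Adj w t := by
    rintro w ⟨i, ⟨k, hk, rfl⟩, rfl⟩ t ht hadj'
    rcases nonbranch_nbrs hn hinj hadj (hFnb k hk) hadj' with rfl | rfl
    · exact hTH2 ht ⟨_, rfl⟩
    · exact hTH2 ht ⟨_, rfl⟩
  have hUstable : GStable G (W ∪ T) := gstable_union hWstable hTstable hcross
  have hdisjWT : Disjoint W T := Set.disjoint_of_subset hWsub hTH2 disjoint_compl_right
  have hUcard : (W ∪ T).ncard = n / 2 + T.ncard := by
    rw [Set.ncard_union_eq hdisjWT (Set.toFinite _) (Set.toFinite _), hWcard]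
  have hge : n / 2 + T.ncard ≤ alphaNum G.Adj := by
    rw [← hUcard]; exact gstable_le_alpha hUstable
  refine ⟨H1, H2, ⟨x 0, 0, rfl⟩, Set.nonempty_compl.2 hprop, disjoint_compl_right,
    Set.union_compl_self H1, ?_⟩
  apply le_antisymm (alpha_split_le (Set.union_compl_self H1))
  rw [hA1, ← hTcard]
  exact hge
end ScenA

section ScenB
variable [Finite V]

lemma ncard_Iio (m : ℕ) : (Set.Iio m).ncard = m := by
  rw [← Finset.coe_range, Set.ncard_coe_finset, Finset.card_range]

lemma scenarioB (G : SimpleGraph V) {n : ℕ} (x : ZMod n → V)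
    (hn : 3 ≤ n) (hinj : Function.Injective x)
    (hadj : ∀ i j, G.Adj (x i) (x j) ↔ (j = i + 1 ∨ i = j + 1))
    (d : ℕ) (hd3 : 3 ≤ d) (hdlt : d < n) (hdodd : Odd d) (hbev : Even (n - d - 1))
    (hbranch : ∀ i : ZMod n, 2 < (G.neighborSet (x i)).ncard → i = 0 ∨ i = (d : ZMod n)) :
    ∃ H1 H2 : Set V, H1.Nonempty ∧ H2.Nonempty ∧ Disjoint H1 H2 ∧
      H1 ∪ H2 = Set.univ ∧
      alphaNum G.Adj =
        alphaNum (fun a b : H1 => G.Adj a.1 b.1) +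
          alphaNum (fun a b : H2 => G.Adj a.1 b.1) := by
  classical
  haveI : NeZero n := ⟨by omega⟩
  set H1 : Set V := x '' (Nat.cast '' Set.Icc 1 (d-1)) with hH1
  set H2 : Set V := H1ᶜ with hH2
  -- basic membership facts
  have hmem : ∀ m : ℕ, m < n → (x m ∈ H1 ↔ 1 ≤ m ∧ m ≤ d - 1) := by
    intro m hm
    constructor
    · rintro ⟨i, ⟨k, hk, rfl⟩, he⟩
      obtain ⟨hka, hkb⟩ := hk
      have := (cast_inj_lt hn (by omega : k < n) hm).1 (hinj he)
      omega
    · intro hm1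
      exact ⟨m, ⟨m, hm1, rfl⟩, rfl⟩
  have hnonb : ∀ k : ℕ, k < n → k ≠ 0 → k ≠ d → ¬ 2 < (G.neighborSet (x k)).ncard := by
    intro k hk hk0 hkd hgt
    rcases hbranch _ hgt with h | h
    · rw [show (0 : ZMod n) = ((0:ℕ) : ZMod n) by norm_num] at h
      exact hk0 ((cast_inj_lt hn hk (by omega)).1 h)
    · exact hkd ((cast_inj_lt hn hk hdlt).1 h)
  -- the two alternating stable sets of the arc
  set Fq : Set ℕ := (fun i => 2*i+1) '' Set.Iio ((d-1)/2) with hFq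
  set Fp : Set ℕ := (fun i => 2*i+2) '' Set.Iio ((d-1)/2) with hFp
  have hFqbd : ∀ k ∈ Fq, 1 ≤ k ∧ k ≤ d - 2 ∧ k % 2 = 1 := by
    rintro k ⟨i, hi, rfl⟩
    simp only [Set.mem_Iio] at hi
    obtain ⟨c, hc⟩ := hdodd
    show 1 ≤ 2*i+1 ∧ 2*i+1 ≤ d - 2 ∧ (2*i+1) % 2 = 1
    omega
  have hFpbd : ∀ k ∈ Fp, 2 ≤ k ∧ k ≤ d - 1 ∧ k % 2 = 0 := by
    rintro k ⟨i, hi, rfl⟩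
    simp only [Set.mem_Iio] at hi
    obtain ⟨c, hc⟩ := hdodd
    show 2 ≤ 2*i+2 ∧ 2*i+2 ≤ d - 1 ∧ (2*i+2) % 2 = 0
    omega
  have hFqlt : ∀ k ∈ Fq, k < n := by
    intro k hk; have := hFqbd k hk; omega
  have hFplt : ∀ k ∈ Fp, k < n := by
    intro k hk; have := hFpbd k hk; omega
  have hFqcons : ∀ k ∈ Fq, ∀ l ∈ Fq, ¬ (l = k + 1 ∨ (k = n - 1 ∧ l = 0)) := by
    intro k hk l hl
    have h1 := hFqbd k hk; have h2 := hFqbd l hl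
    omega
  have hFpcons : ∀ k ∈ Fp, ∀ l ∈ Fp, ¬ (l = k + 1 ∨ (k = n - 1 ∧ l = 0)) := by
    intro k hk l hl
    have h1 := hFpbd k hk; have h2 := hFpbd l hl
    omega
  set Wq : Set V := x '' (Nat.cast '' Fq) with hWq
  set Wp : Set V := x '' (Nat.cast '' Fp) with hWp
  have hWqstable : GStable G Wq := stable_of_indices hn hinj hadj Fq hFqlt hFqcons
  have hWpstable : GStable G Wp := stable_of_indices hn hinj hadj Fp hFplt hFpcons
  have hinj2 : ∀ m : ℕ, Function.Injective (fun i => 2*i+m) := by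
    intro m a b h; simp at h; omega
  have hFqcard : Fq.ncard = (d-1)/2 := by
    rw [hFq, Set.ncard_image_of_injective _ (hinj2 1), ncard_Iio]
  have hFpcard : Fp.ncard = (d-1)/2 := by
    rw [hFp, Set.ncard_image_of_injective _ (hinj2 2), ncard_Iio]
  have hWqcard : Wq.ncard = (d-1)/2 := by
    rw [hWq, ncard_image_indices hn hinj Fq hFqlt, hFqcard]
  have hWpcard : Wp.ncard = (d-1)/2 := by
    rw [hWp, ncard_image_indices hn hinj Fp hFplt, hFpcard]
  have hWqsub : Wq ⊆ H1 := by
    rintro v ⟨i, ⟨k, hk, rfl⟩, rfl⟩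
    have := hFqbd k hk
    exact ⟨(k : ZMod n), ⟨k, by constructor <;> omega, rfl⟩, rfl⟩
  have hWpsub : Wp ⊆ H1 := by
    rintro v ⟨i, ⟨k, hk, rfl⟩, rfl⟩
    have := hFpbd k hk
    exact ⟨(k : ZMod n), ⟨k, by constructor <;> omega, rfl⟩, rfl⟩
  -- neighbour location for arc vertices
  have hnbr_loc : ∀ k : ℕ, 1 ≤ k → k ≤ d - 1 → ∀ v, G.Adj (x k) v →
      v = x ((k-1 : ℕ)) ∨ v = x ((k+1 : ℕ)) := by
    intro k hk1 hkd v hv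
    have hkn : k < n := by omega
    have hnb := hnonb k hkn (by omega) (by omega)
    rcases nonbranch_nbrs hn hinj hadj hnb hv with h | h
    · left
      rw [h]
      congr 1
      push_cast [Nat.cast_sub hk1]
      ring
    · right
      rw [h]
      congr 1
      push_cast
      ring
  -- alpha of H1
  have hA1 : alphaNum (fun a b : H1 => G.Adj a.1 b.1) = (d-1)/2 := by
    apply le_antisymm
    · apply alpha_sub_le
      intro T hTH hT
      have := arc_stable_bound hn hinj hadj (le_refl 1) (by omega : (d-1) + 1 < n) hTH hT
      obtain ⟨c, hc⟩ := hdodd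
      omega
    · rw [← hWqcard]; exact le_alpha_sub hWqsub hWqstable
  -- key extension lemmas
  have keyq : ∀ T : Set V, T ⊆ H2 → GStable G T → x 0 ∉ T →
      (d-1)/2 + T.ncard ≤ alphaNum G.Adj := by
    intro T hTH hT h0
    have hcross : ∀ w ∈ Wq, ∀ t ∈ T, ¬ G.Adj w t := by
      rintro w ⟨i, ⟨k, hk, rfl⟩, rfl⟩ t ht hadj'
      obtain ⟨hk1, hk2, hk3⟩ := hFqbd k hk
      rcases hnbr_loc k hk1 (by omega) t hadj' with rfl | rfl
      · rcases Nat.eq_or_lt_of_le hk1 with h | h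
        · apply h0
          rw [show ((k-1:ℕ) : ZMod n) = 0 by rw [← h]; norm_num] at ht
          exact ht
        · exact hTH ht ((hmem (k-1) (by omega)).2 (by omega))
      · exact hTH ht ((hmem (k+1) (by omega)).2 (by omega))
    have hstab := gstable_union hWqstable hT hcross
    have hdisj : Disjoint Wq T := Set.disjoint_of_subset hWqsub hTH disjoint_compl_right
    have := gstable_le_alpha hstab
    rwa [Set.ncard_union_eq hdisj (Set.toFinite _) (Set.toFinite _), hWqcard] at this
  have keyp : ∀ T : Set V, T ⊆ H2 → GStable G T → x d ∉ T →
      (d-1)/2 + T.ncard ≤ alphaNum G.Adj := by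
    intro T hTH hT h0
    have hcross : ∀ w ∈ Wp, ∀ t ∈ T, ¬ G.Adj w t := by
      rintro w ⟨i, ⟨k, hk, rfl⟩, rfl⟩ t ht hadj'
      obtain ⟨hk1, hk2, hk3⟩ := hFpbd k hk
      rcases hnbr_loc k (by omega) hk2 t hadj' with rfl | rfl
      · exact hTH ht ((hmem (k-1) (by omega)).2 (by omega))
      · rcases Nat.eq_or_lt_of_le hk2 with h | h
        · rw [show k + 1 = d by omega] at ht
          exact h0 ht
        · exact hTH ht ((hmem (k+1) (by omega)).2 (by omega))
    have hstab := gstable_union hWpstable hT hcross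
    have hdisj : Disjoint Wp T := Set.disjoint_of_subset hWpsub hTH disjoint_compl_right
    have := gstable_le_alpha hstab
    rwa [Set.ncard_union_eq hdisj (Set.toFinite _) (Set.toFinite _), hWpcard] at this
  -- main inequality
  obtain ⟨T, hTH2, hTstable, hTcard⟩ := exists_alpha_sub (G := G) H2
  have hmain : (d-1)/2 + T.ncard ≤ alphaNum G.Adj := by
    by_cases h0 : x 0 ∉ T
    · exact keyq T hTH2 hTstable h0
    by_cases hd : x d ∉ T
    · exact keyp T hTH2 hTstable hd
    push_neg at h0 hd
    -- both endpoints are in T : rebuild T on the other arc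
    have hdne : d ≠ n - 1 := by
      intro hdn
      have : G.Adj (x ((d:ℕ):ZMod n)) (x ((0:ℕ):ZMod n)) := by
        rw [adj_nat hn hadj hdlt (by omega)]
        omega
      rw [Nat.cast_zero] at this
      exact hTstable _ hd _ h0 this
    set b : ℕ := n - d - 1 with hb
    have hb2 : 2 ≤ b := by
      rcases hbev with ⟨c, hc⟩
      omega
    set Qidx : Set ℕ := Set.Icc (d+1) (n-1) with hQidx
    set Qset : Set V := x '' (Nat.cast '' Qidx) with hQset
    set FZ : Set ℕ := (fun i => d+2+2*i) '' Set.Iio (b/2) with hFZ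
    set Z : Set V := x '' (Nat.cast '' FZ) with hZ
    have hFZbd : ∀ k ∈ FZ, d + 2 ≤ k ∧ k ≤ n - 1 ∧ k % 2 = d % 2 := by
      rintro k ⟨i, hi, rfl⟩
      simp only [Set.mem_Iio] at hi
      obtain ⟨c, hc⟩ := hbev
      show d + 2 ≤ d+2+2*i ∧ d+2+2*i ≤ n - 1 ∧ (d+2+2*i) % 2 = d % 2
      omega
    have hFZlt : ∀ k ∈ FZ, k < n := by
      intro k hk; have := hFZbd k hk; omega
    have hFZcons : ∀ k ∈ FZ, ∀ l ∈ FZ, ¬ (l = k + 1 ∨ (k = n - 1 ∧ l = 0)) := by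
      intro k hk l hl
      have h1 := hFZbd k hk; have h2 := hFZbd l hl
      omega
    have hZstable : GStable G Z := stable_of_indices hn hinj hadj FZ hFZlt hFZcons
    have hFZcard : FZ.ncard = b/2 := by
      rw [hFZ, Set.ncard_image_of_injective _ (fun a c h => by simp at h; omega), ncard_Iio]
    have hZcard : Z.ncard = b/2 := by
      rw [hZ, ncard_image_indices hn hinj FZ hFZlt, hFZcard]
    set Kept : Set V := T \ (Qset ∪ {x 0}) with hKept
    -- the part of T on the inner arc is small
    have hTQsub : T ∩ Qset ⊆ x '' (Nat.cast '' Set.Icc (d+2) (n-2)) := by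
      rintro v ⟨hvT, ⟨i, ⟨k, hk, rfl⟩, rfl⟩⟩
      have hkbd : d + 1 ≤ k ∧ k ≤ n - 1 := hk
      have hkne1 : k ≠ d + 1 := by
        intro he
        have : G.Adj (x ((d:ℕ):ZMod n)) (x ((k:ℕ):ZMod n)) := by
          rw [adj_nat hn hadj hdlt (by omega)]
          omega
        exact hTstable _ hd _ hvT this
      have hkne2 : k ≠ n - 1 := by
        intro he
        have : G.Adj (x ((k:ℕ):ZMod n)) (x ((0:ℕ):ZMod n)) := by
          rw [adj_nat hn hadj (by omega) (by omega)]
          omega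
        rw [Nat.cast_zero] at this
        exact hTstable _ hvT _ h0 this
      exact ⟨(k:ZMod n), ⟨k, by constructor <;> omega, rfl⟩, rfl⟩
    have hTQbound : (T ∩ Qset).ncard ≤ b/2 - 1 := by
      have hst : GStable G (T ∩ Qset) := fun u hu v hv => hTstable u hu.1 v hv.1
      have := arc_stable_bound hn hinj hadj (by omega : 1 ≤ d+2)
        (by omega : (n-2) + 1 < n) hTQsub hst
      obtain ⟨c, hc⟩ := hbev
      omega
    -- cardinality of Kept
    have hTsplit : T.ncard ≤ Kept.ncard + (T ∩ Qset).ncard + 1 := by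
      have hdecomp : T = Kept ∪ (T ∩ (Qset ∪ {x 0})) := by
        rw [hKept, Set.diff_union_inter]
      have h1 : (T ∩ (Qset ∪ {x 0})).ncard ≤ (T ∩ Qset).ncard + 1 := by
        have hsub2 : T ∩ (Qset ∪ {x 0}) ⊆ (T ∩ Qset) ∪ {x 0} := by
          rintro v ⟨hvT, hvQ | hv0⟩
          · exact Or.inl ⟨hvT, hvQ⟩
          · exact Or.inr hv0
        calc (T ∩ (Qset ∪ {x 0})).ncard ≤ ((T ∩ Qset) ∪ {x 0}).ncard :=
              Set.ncard_le_ncard hsub2 (Set.toFinite _)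
          _ ≤ (T ∩ Qset).ncard + ({x 0} : Set V).ncard := Set.ncard_union_le _ _
          _ = (T ∩ Qset).ncard + 1 := by rw [Set.ncard_singleton]
      calc T.ncard = (Kept ∪ (T ∩ (Qset ∪ {x 0}))).ncard := by rw [← hdecomp]
        _ ≤ Kept.ncard + (T ∩ (Qset ∪ {x 0})).ncard := Set.ncard_union_le _ _
        _ ≤ Kept.ncard + ((T ∩ Qset).ncard + 1) := by omega
        _ = _ := by omega
    -- Z is disjoint from Kept and from H1
    have hZQ : Z ⊆ Qset := by
      rintro v ⟨i, ⟨k, hk, rfl⟩, rfl⟩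
      have := hFZbd k hk
      exact ⟨(k:ZMod n), ⟨k, by constructor <;> omega, rfl⟩, rfl⟩
    have hZH2 : Z ⊆ H2 := by
      rintro v ⟨i, ⟨k, hk, rfl⟩, rfl⟩
      have hkb := hFZbd k hk
      intro hvH1
      have := (hmem k (by omega)).1 hvH1
      omega
    have hZKept : Disjoint Z Kept := by
      rw [Set.disjoint_right]
      intro v hv hvZ
      exact hv.2 (Or.inl (hZQ hvZ))
    -- cross edges between Z and Kept do not exist
    have hcrossZ : ∀ z ∈ Z, ∀ t ∈ Kept, ¬ G.Adj z t := by
      rintro z ⟨i, ⟨k, hk, rfl⟩, rfl⟩ t ht hadj'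
      obtain ⟨hk1, hk2, hk3⟩ := hFZbd k hk
      have hkn : k < n := by omega
      have hnb := hnonb k hkn (by omega) (by omega)
      rcases nonbranch_nbrs hn hinj hadj hnb hadj' with h | h
      · -- t = x (k-1), and k-1 lies in the inner arc
        have he : ((k-1:ℕ) : ZMod n) = (k : ZMod n) - 1 := by
          push_cast [Nat.cast_sub (by omega : 1 ≤ k)]
          ring
        rw [← he] at h
        apply ht.2
        left
        rw [h]
        exact ⟨((k-1:ℕ) : ZMod n), ⟨k-1, by constructor <;> omega, rfl⟩, rfl⟩
      · -- t = x (k+1) : either inner arc or x 0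
        rcases Nat.eq_or_lt_of_le hk2 with hke | hke
        · -- k = n-1 : x k + 1 = x 0
          apply ht.2
          right
          rw [h]
          have : (k : ZMod n) + 1 = 0 := by
            rw [show k = n - 1 by omega]
            push_cast [Nat.cast_sub (by omega : 1 ≤ n)]
            simp [ZMod.natCast_self]
          rw [this]
          rfl
        · have he : ((k+1:ℕ) : ZMod n) = (k : ZMod n) + 1 := by push_cast; ring
          rw [← he] at h
          apply ht.2
          left
          rw [h]
          exact ⟨((k+1:ℕ) : ZMod n), ⟨k+1, by constructor <;> omega, rfl⟩, rfl⟩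
    -- assemble T'
    set T' : Set V := Kept ∪ Z with hT'
    have hT'stable : GStable G T' := by
      apply gstable_union
      · intro u hu v hv; exact hTstable u hu.1 v hv.1
      · exact hZstable
      · intro s hs t ht hadj'
        exact hcrossZ t ht s hs hadj'.symm
    have hT'H2 : T' ⊆ H2 := by
      rintro v (hv | hv)
      · exact hTH2 hv.1
      · exact hZH2 hv
    have hT'0 : x 0 ∉ T' := by
      rintro (hv | hv)
      · exact hv.2 (Or.inr rfl)
      · obtain ⟨i, ⟨k, hk, rfl⟩, he⟩ := hv
        have hkb := hFZbd k hk
        have : (k : ZMod n) = ((0:ℕ) : ZMod n) := by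
          rw [Nat.cast_zero]; exact hinj he
        have := (cast_inj_lt hn (by omega) (by omega)).1 this
        omega
    have hT'card : T.ncard ≤ T'.ncard := by
      have : T'.ncard = Kept.ncard + Z.ncard :=
        Set.ncard_union_eq hZKept.symm (Set.toFinite _) (Set.toFinite _)
      omega
    have := keyq T' hT'H2 hT'stable hT'0
    omega
  -- conclude
  refine ⟨H1, H2, ?_, ?_, disjoint_compl_right, Set.union_compl_self H1, ?_⟩
  · exact ⟨x ((1:ℕ) : ZMod n), (1:ZMod n), ⟨1, by constructor <;> omega, by norm_num⟩, by norm_num⟩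
  · refine ⟨x 0, ?_⟩
    rw [hH2, Set.mem_compl_iff]
    intro h0
    rw [show (0 : ZMod n) = ((0:ℕ):ZMod n) by norm_num] at h0
    have := (hmem 0 (by omega)).1 h0
    omega
  · apply le_antisymm (alpha_split_le (Set.union_compl_self H1))
    rw [hA1, ← hTcard]
    exact hmain
end ScenB

section Glue
variable [Finite V]

lemma scenarioA_odds (G : SimpleGraph V) {n : ℕ} (x : ZMod n → V)
    (hn : 3 ≤ n) (hinj : Function.Injective x)
    (hadj : ∀ i j, G.Adj (x i) (x j) ↔ (j = i + 1 ∨ i = j + 1))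
    (hprop : Set.range x ≠ Set.univ)
    (hbr : ∀ k : ℕ, k < n → k % 2 = 1 → ¬ 2 < (G.neighborSet (x k)).ncard) :
    ∃ H1 H2 : Set V, H1.Nonempty ∧ H2.Nonempty ∧ Disjoint H1 H2 ∧
      H1 ∪ H2 = Set.univ ∧
      alphaNum G.Adj =
        alphaNum (fun a b : H1 => G.Adj a.1 b.1) +
          alphaNum (fun a b : H2 => G.Adj a.1 b.1) := by
  set F : Set ℕ := (fun i => 2*i+1) '' Set.Iio (n/2) with hF
  have hFbd : ∀ k ∈ F, 1 ≤ k ∧ k < n ∧ k % 2 = 1 := by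
    rintro k ⟨i, hi, rfl⟩
    simp only [Set.mem_Iio] at hi
    show 1 ≤ 2*i+1 ∧ 2*i+1 < n ∧ (2*i+1) % 2 = 1
    omega
  apply scenarioA G x hn hinj hadj hprop F
  · intro k hk; exact (hFbd k hk).2.1
  · intro k hk l hl
    have h1 := hFbd k hk; have h2 := hFbd l hl
    omega
  · rw [hF, Set.ncard_image_of_injective _ (fun a b h => by simp at h; omega), ncard_Iio]
  · intro k hk
    have h1 := hFbd k hk
    exact hbr k h1.2.1 h1.2.2

theorem induced_cycle_partition' (G : SimpleGraph V) (C : Set V)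
    (hC : InducedCycleSet G C) (hproper : C ≠ Set.univ)
    (hdeg : {v | v ∈ C ∧ 2 < (G.neighborSet v).ncard}.ncard ≤ 2) :
    ∃ H1 H2 : Set V, H1.Nonempty ∧ H2.Nonempty ∧ Disjoint H1 H2 ∧
      H1 ∪ H2 = Set.univ ∧
      alphaNum G.Adj =
        alphaNum (fun a b : H1 => G.Adj a.1 b.1) +
          alphaNum (fun a b : H2 => G.Adj a.1 b.1) := by
  classical
  obtain ⟨n, x, hn, hinj, hrange, hadj⟩ := hC
  haveI : NeZero n := ⟨by omega⟩
  have hprop : Set.range x ≠ Set.univ := by rw [hrange]; exact hproper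
  -- at most two branch vertices on the cycle
  have hthree : ∀ v1 v2 v3 : V, v1 ∈ C → v2 ∈ C → v3 ∈ C → v1 ≠ v2 → v1 ≠ v3 → v2 ≠ v3 →
      2 < (G.neighborSet v1).ncard → 2 < (G.neighborSet v2).ncard →
      2 < (G.neighborSet v3).ncard → False := by
    intro v1 v2 v3 hc1 hc2 hc3 h12 h13 h23 hd1 hd2 hd3
    have hsub : ({v1, v2, v3} : Set V) ⊆ {v | v ∈ C ∧ 2 < (G.neighborSet v).ncard} := by
      rintro v (rfl | rfl | rfl)
      · exact ⟨hc1, hd1⟩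
      · exact ⟨hc2, hd2⟩
      · exact ⟨hc3, hd3⟩
    have h3 : ({v1, v2, v3} : Set V).ncard = 3 := by
      rw [Set.ncard_insert_of_notMem (by simp [h12, h13]),
        Set.ncard_insert_of_notMem (by simp [h23]), Set.ncard_singleton]
    have := Set.ncard_le_ncard hsub (Set.toFinite _)
    omega
  by_cases hnob : ∀ i : ZMod n, ¬ 2 < (G.neighborSet (x i)).ncard
  · exact scenarioA_odds G x hn hinj hadj hprop (fun k hk hk2 => hnob _)
  push_neg at hnob
  obtain ⟨b1, hb1⟩ := hnob
  -- rotate so that a branch vertex sits at position 0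
  set x1 : ZMod n → V := fun i => x (i + b1) with hx1
  have hinj1 : Function.Injective x1 := fun a b h => by
    have := hinj h; exact add_right_cancel this
  have hadj1 : ∀ i j, G.Adj (x1 i) (x1 j) ↔ (j = i + 1 ∨ i = j + 1) := by
    intro i j
    rw [hx1]
    show G.Adj (x (i + b1)) (x (j + b1)) ↔ _
    rw [hadj (i + b1) (j + b1)]
    constructor <;> rintro (h | h)
    · left; linear_combination h
    · right; linear_combination h
    · left; linear_combination h
    · right; linear_combination h
  have hrange1 : Set.range x1 = C := by
    rw [← hrange]
    ext v
    constructor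
    · rintro ⟨i, rfl⟩; exact ⟨i + b1, rfl⟩
    · rintro ⟨i, rfl⟩
      exact ⟨i - b1, by show x (i - b1 + b1) = x i; rw [sub_add_cancel]⟩
  have hprop1 : Set.range x1 ≠ Set.univ := by rw [hrange1]; exact hproper
  have hb1' : 2 < (G.neighborSet (x1 0)).ncard := by
    show 2 < (G.neighborSet (x (0 + b1))).ncard
    rwa [zero_add]
  by_cases honly : ∀ i : ZMod n, 2 < (G.neighborSet (x1 i)).ncard → i = 0
  · -- only one branch vertex
    apply scenarioA_odds G x1 hn hinj1 hadj1 hprop1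
    intro k hk hk2 hbr
    have := honly _ hbr
    rw [show (0 : ZMod n) = ((0:ℕ) : ZMod n) by norm_num] at this
    have := (cast_inj_lt hn hk (by omega)).1 this
    omega
  push_neg at honly
  obtain ⟨t, hbt, ht0⟩ := honly
  -- exactly two branch vertices, at positions 0 and t
  have hbranch1 : ∀ i : ZMod n, 2 < (G.neighborSet (x1 i)).ncard → i = 0 ∨ i = t := by
    intro i hi
    by_contra hcon
    push_neg at hcon
    refine hthree (x1 0) (x1 t) (x1 i) ?_ ?_ ?_ ?_ ?_ ?_ hb1' hbt hi
    · rw [← hrange1]; exact ⟨0, rfl⟩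
    · rw [← hrange1]; exact ⟨t, rfl⟩
    · rw [← hrange1]; exact ⟨i, rfl⟩
    · intro h; exact ht0 (hinj1 h).symm
    · intro h; exact hcon.1 (hinj1 h).symm
    · intro h; exact hcon.2 (hinj1 h).symm
  set d : ℕ := t.val with hd
  have hdlt : d < n := ZMod.val_lt t
  have hd0 : d ≠ 0 := fun h => ht0 ((ZMod.val_eq_zero t).1 h)
  have hcastd : ((d : ℕ) : ZMod n) = t := by rw [hd, ZMod.natCast_val, ZMod.cast_id]
  by_cases hdpar : d % 2 = 0
  · -- second branch vertex at even position : all-odd stable set works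
    apply scenarioA_odds G x1 hn hinj1 hadj1 hprop1
    intro k hk hk2 hbr
    rcases hbranch1 _ hbr with h | h
    · rw [show (0 : ZMod n) = ((0:ℕ) : ZMod n) by norm_num] at h
      have := (cast_inj_lt hn hk (by omega)).1 h
      omega
    · rw [← hcastd] at h
      have := (cast_inj_lt hn hk hdlt).1 h
      omega
  · have hdodd : d % 2 = 1 := by omega
    by_cases hnpar : n % 2 = 1
    · -- n odd : combined stable set avoiding 0 and d
      set F : Set ℕ := (fun i => 2*i+1) '' Set.Iio ((d-1)/2) ∪
        (fun i => d+1+2*i) '' Set.Iio ((n-d)/2) with hF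
      have hFbd : ∀ k ∈ F, (k % 2 = 1 ∧ 1 ≤ k ∧ k ≤ d - 2) ∨
          (k % 2 = 0 ∧ d + 1 ≤ k ∧ k ≤ n - 1) := by
        rintro k (⟨i, hi, rfl⟩ | ⟨i, hi, rfl⟩) <;> simp only [Set.mem_Iio] at hi
        · left
          show (2*i+1) % 2 = 1 ∧ 1 ≤ 2*i+1 ∧ 2*i+1 ≤ d - 2
          omega
        · right
          show (d+1+2*i) % 2 = 0 ∧ d + 1 ≤ d+1+2*i ∧ d+1+2*i ≤ n - 1
          omega
      apply scenarioA G x1 hn hinj1 hadj1 hprop1 F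
      · intro k hk; have := hFbd k hk; omega
      · intro k hk l hl
        have h1 := hFbd k hk; have h2 := hFbd l hl
        omega
      · have hdisjF : Disjoint ((fun i => 2*i+1) '' Set.Iio ((d-1)/2))
            ((fun i => d+1+2*i) '' Set.Iio ((n-d)/2)) := by
          rw [Set.disjoint_left]
          rintro k ⟨i, hi, rfl⟩ ⟨j, hj, he⟩
          simp only [Set.mem_Iio] at hi hj
          simp only at he
          omega
        rw [hF, Set.ncard_union_eq hdisjF (Set.toFinite _) (Set.toFinite _),
          Set.ncard_image_of_injective _ (fun a b h => by simp at h; omega),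
          Set.ncard_image_of_injective _ (fun a b h => by simp at h; omega),
          ncard_Iio, ncard_Iio]
        omega
      · intro k hk hbr
        have hkb := hFbd k hk
        rcases hbranch1 _ hbr with h | h
        · rw [show (0 : ZMod n) = ((0:ℕ) : ZMod n) by norm_num] at h
          have := (cast_inj_lt hn (by omega) (by omega)).1 h
          omega
        · rw [← hcastd] at h
          have := (cast_inj_lt hn (by omega) hdlt).1 h
          omega
    · -- n even, d odd : the hard case
      have hnev : n % 2 = 0 := by omega
      have hbev : Even (n - d - 1) := by
        rcases Nat.even_or_odd (n - d - 1) with h | h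
        · exact h
        · exfalso; obtain ⟨c, hc⟩ := h; omega
      have hbranch1' : ∀ i : ZMod n, 2 < (G.neighborSet (x1 i)).ncard →
          i = 0 ∨ i = ((d : ℕ) : ZMod n) := by
        intro i hi
        rcases hbranch1 i hi with h | h
        · exact Or.inl h
        · exact Or.inr (by rw [hcastd]; exact h)
      by_cases hd3 : 3 ≤ d
      · exact scenarioB G x1 hn hinj1 hadj1 d hd3 hdlt ⟨d/2, by omega⟩ hbev hbranch1'
      · -- d = 1 : reflect the cycle
        have hd1 : d = 1 := by omega
        set x2 : ZMod n → V := fun i => x1 (-i) with hx2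
        have hinj2 : Function.Injective x2 := fun a b h => by
          have := hinj1 h; exact neg_injective this
        have hadj2 : ∀ i j, G.Adj (x2 i) (x2 j) ↔ (j = i + 1 ∨ i = j + 1) := by
          intro i j
          show G.Adj (x1 (-i)) (x1 (-j)) ↔ _
          rw [hadj1 (-i) (-j)]
          constructor <;> rintro (h | h)
          · right; linear_combination h
          · left; linear_combination h
          · right; linear_combination h
          · left; linear_combination h
        have hbranch2 : ∀ i : ZMod n, 2 < (G.neighborSet (x2 i)).ncard →
            i = 0 ∨ i = ((n-1 : ℕ) : ZMod n) := by
          intro i hi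
          rcases hbranch1 (-i) hi with h | h
          · left; linear_combination -h
          · right
            have ht1 : t = ((1:ℕ) : ZMod n) := by rw [← hcastd, hd1]
            rw [ht1] at h
            have hcast : ((n - 1 : ℕ) : ZMod n) = -1 := by
              push_cast [Nat.cast_sub (by omega : 1 ≤ n)]
              simp [ZMod.natCast_self]
            rw [hcast]
            push_cast at h ⊢
            linear_combination -h
        exact scenarioB G x2 hn hinj2 hadj2 (n-1) (by omega) (by omega)
          ⟨(n-1)/2, by omega⟩ ⟨0, by omega⟩ hbranch2

end Glue


/-- If `G` contains a proper induced cycle with at most two vertices of degree greater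
than two, then `G` splits into two proper induced subgraphs `H1, H2` with
`α(G) = α(H1) + α(H2)`. -/
theorem induced_cycle_partition {V : Type*} [Finite V] (G : SimpleGraph V) (C : Set V)
    (hC : InducedCycleSet G C) (hproper : C ≠ Set.univ)
    (hdeg : {v | v ∈ C ∧ 2 < (G.neighborSet v).ncard}.ncard ≤ 2) :
    ∃ H1 H2 : Set V, H1.Nonempty ∧ H2.Nonempty ∧ Disjoint H1 H2 ∧
      H1 ∪ H2 = Set.univ ∧
      alphaNum G.Adj =
        alphaNum (fun a b : H1 => G.Adj a.1 b.1) +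
          alphaNum (fun a b : H2 => G.Adj a.1 b.1) := by
  exact induced_cycle_partition' G C hC hproper hdeg
end

section
/- If D is a digraph with no induced anti-directed odd cycle and the underlying graph of D is a cycle, then D is α-diperfect. -/
open Relation

variable {V : Type*}

set_option linter.unusedSectionVars false

section AuxPart

/-- Partition of a vertex subset `W` into directed paths, each containing exactly one
vertex of `S`. -/
def PartOn (A : V → V → Prop) (W S : Set V) (P : Set (List V)) : Prop :=
  (∀ l ∈ P, IsDiPath A l) ∧ (∀ l ∈ P, ∀ v ∈ l, v ∈ W) ∧
  (∀ v ∈ W, ∃! l, l ∈ P ∧ v ∈ l) ∧ (∀ l ∈ P, ∃! s, s ∈ l ∧ s ∈ S)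

theorem partOn_empty {A : V → V → Prop} {S : Set V} : PartOn A ∅ S ∅ := by
  refine ⟨?_, ?_, ?_, ?_⟩
  · intro l hl; exact absurd hl (Set.notMem_empty l)
  · intro l hl; exact absurd hl (Set.notMem_empty l)
  · intro v hv; exact absurd hv (Set.notMem_empty v)
  · intro l hl; exact absurd hl (Set.notMem_empty l)

theorem partOn_insert {A : V → V → Prop} {W W' S S' : Set V} {l₀ : List V}
    {P' : Set (List V)}
    (h₀ : IsDiPath A l₀)
    (hW : ∀ v, v ∈ W ↔ v ∈ W' ∨ v ∈ l₀)
    (hdisj : ∀ v ∈ l₀, v ∉ W')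
    (hone : ∃! s, s ∈ l₀ ∧ s ∈ S)
    (hS' : ∀ v ∈ W', (v ∈ S ↔ v ∈ S'))
    (hP' : PartOn A W' S' P') :
    PartOn A W S (insert l₀ P') := by
  obtain ⟨hd', hsub', hcov', hone'⟩ := hP'
  refine ⟨?_, ?_, ?_, ?_⟩
  · intro l hl
    rcases Set.mem_insert_iff.mp hl with rfl | hl
    · exact h₀
    · exact hd' l hl
  · intro l hl v hv
    rcases Set.mem_insert_iff.mp hl with rfl | hl
    · exact (hW v).2 (Or.inr hv)
    · exact (hW v).2 (Or.inl (hsub' l hl v hv))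
  · intro v hv
    rcases (hW v).1 hv with hv' | hv0
    · obtain ⟨l, ⟨hlP, hvl⟩, huniq⟩ := hcov' v hv'
      refine ⟨l, ⟨Set.mem_insert_iff.mpr (Or.inr hlP), hvl⟩, ?_⟩
      intro y hy
      rcases Set.mem_insert_iff.mp hy.1 with rfl | hy'
      · exact absurd hv' (hdisj v hy.2)
      · exact huniq y ⟨hy', hy.2⟩
    · refine ⟨l₀, ⟨Set.mem_insert_iff.mpr (Or.inl rfl), hv0⟩, ?_⟩
      intro y hy
      rcases Set.mem_insert_iff.mp hy.1 with rfl | hy'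
      · rfl
      · exact absurd (hsub' y hy' v hy.2) (hdisj v hv0)
  · intro l hl
    rcases Set.mem_insert_iff.mp hl with rfl | hl
    · exact hone
    · obtain ⟨s, ⟨hsl, hsS'⟩, hu⟩ := hone' l hl
      refine ⟨s, ⟨hsl, (hS' s (hsub' l hl s hsl)).2 hsS'⟩, ?_⟩
      intro y hy
      exact hu y ⟨hy.1, (hS' y (hsub' l hl y hy.1)).1 hy.2⟩

end AuxPart

section ZModCycle

variable {n : ℕ} [NeZero n] {A : ZMod n → ZMod n → Prop}

private lemma val_cast_back (z : ZMod n) : ((z.val : ℕ) : ZMod n) = z := by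
  rw [ZMod.natCast_val, ZMod.cast_id]

private lemma castval (c z : ZMod n) : c + ((z - c).val : ZMod n) = z := by
  rw [val_cast_back]; ring

private lemma natinj {a b : ℕ} (ha : a < n) (hb : b < n)
    (h : (a : ZMod n) = (b : ZMod n)) : a = b := by
  have := congrArg ZMod.val h
  rwa [ZMod.val_cast_of_lt ha, ZMod.val_cast_of_lt hb] at this

private lemma cast_n_sub {j : ℕ} (h : j ≤ n) : ((n - j : ℕ) : ZMod n) = -(j : ZMod n) := by
  rw [Nat.cast_sub h, ZMod.natCast_self]; ring

private lemma zmod_one_ne_zero (hn3 : 3 ≤ n) : (1 : ZMod n) ≠ 0 := by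
  intro h
  have h1 : ((1 : ℕ) : ZMod n) = ((0 : ℕ) : ZMod n) := by push_cast; exact h
  have := natinj (by omega) (by omega) h1
  omega

private lemma two_ne_zero'' (hn3 : 3 ≤ n) : (2 : ZMod n) ≠ 0 := by
  intro h
  have h1 : ((2 : ℕ) : ZMod n) = ((0 : ℕ) : ZMod n) := by push_cast; exact h
  have := natinj (by omega) (by omega) h1
  omega

private lemma self_ne_add_one (hn3 : 3 ≤ n) (i : ZMod n) : i ≠ i + 1 :=
  fun h => zmod_one_ne_zero hn3 (left_eq_add.mp h)

private lemma sub_one_ne_self (hn3 : 3 ≤ n) (i : ZMod n) : i - 1 ≠ i := by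
  intro h
  exact zmod_one_ne_zero hn3 (by linear_combination -h)

private lemma sub_one_ne_add_one (hn3 : 3 ≤ n) (i : ZMod n) : i - 1 ≠ i + 1 := by
  intro h
  exact two_ne_zero'' hn3 (by linear_combination -h)

section WithAdj

variable (hn3 : 3 ≤ n) (hadj : ∀ i j, DAdj A i j ↔ (j = i + 1 ∨ i = j + 1))
include hn3 hadj

private lemma arc_succ (i : ZMod n) : A i (i + 1) ∨ A (i + 1) i :=
  (hadj i (i + 1)).mpr (Or.inl rfl)

private lemma dadj_succ (i : ZMod n) : DAdj A i (i + 1) :=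
  (hadj i (i + 1)).mpr (Or.inl rfl)

private lemma arc_cases {u v : ZMod n} (h : A u v) : v = u + 1 ∨ u = v + 1 :=
  (hadj u v).mp (Or.inl h)

/-- injectivity of the cell map on a stable set -/
private lemma stable_cell_injOn {S : Set (ZMod n)} (hS : IsStable A S) (c : ZMod n) :
    Set.InjOn (fun v => (v - c).val / 2) S := by
  intro u hu v hv hf
  by_contra hne
  have hab : (u - c).val ≠ (v - c).val := by
    intro h
    apply hne
    have : ((u - c).val : ZMod n) = ((v - c).val : ZMod n) := by rw [h]
    rw [val_cast_back, val_cast_back] at this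
    have := sub_left_injective this
    exact this
  have hone : (v - c).val = (u - c).val + 1 ∨ (u - c).val = (v - c).val + 1 := by
    simp only at hf
    omega
  have hD : DAdj A u v := by
    apply (hadj u v).mpr
    rcases hone with h | h
    · left
      have h1 : v - c = (u - c) + 1 := by
        rw [← val_cast_back (v - c), h]
        push_cast
        rw [val_cast_back]
      linear_combination h1
    · right
      have h1 : u - c = (v - c) + 1 := by
        rw [← val_cast_back (u - c), h]
        push_cast
        rw [val_cast_back]
      linear_combination h1
  exact hS u hu v hv hne hD

/-- counting: a stable set contained in `m` consecutive vertices has at most `(m+1)/2`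
elements -/
private lemma count_le {S : Set (ZMod n)} (hS : IsStable A S) (c : ZMod n) (m : ℕ)
    (hm : ∀ v ∈ S, (v - c).val < m) : S.ncard ≤ (m + 1) / 2 := by
  classical
  have hinj := stable_cell_injOn hn3 hadj hS c
  have h1 : S.ncard = ((fun v => (v - c).val / 2) '' S).ncard :=
    (Set.ncard_image_of_injOn hinj).symm
  have h2 : ((fun v => (v - c).val / 2) '' S) ⊆ ↑(Finset.range ((m + 1) / 2)) := by
    rintro y ⟨v, hv, rfl⟩
    simp only [Finset.coe_range, Set.mem_Iio]
    have := hm v hv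
    omega
  have h3 := Set.ncard_le_ncard h2 (Finset.range ((m + 1) / 2)).finite_toSet
  rw [Set.ncard_coe_finset, Finset.card_range] at h3
  omega

omit hadj in
private lemma val_lt1 {v c : ZMod n} (h0 : v ≠ c) : (v - (c + 1)).val < n - 1 := by
  have hv : v = (c + 1) + (((v - (c + 1)).val : ℕ) : ZMod n) := (castval _ _).symm
  have hq : (v - (c + 1)).val < n := ZMod.val_lt _
  by_contra hcon
  have he : (v - (c + 1)).val = n - 1 := by omega
  apply h0
  rw [hv, he, cast_n_sub (by omega)]
  push_cast
  ring

omit hadj in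
private lemma val_lt2 {v c : ZMod n} (h0 : v ≠ c) (h1 : v ≠ c + 1) :
    (v - (c + 2)).val < n - 2 := by
  have hv : v = (c + 2) + (((v - (c + 2)).val : ℕ) : ZMod n) := (castval _ _).symm
  have hq : (v - (c + 2)).val < n := ZMod.val_lt _
  by_contra hcon
  have he : (v - (c + 2)).val = n - 2 ∨ (v - (c + 2)).val = n - 1 := by omega
  rcases he with he | he
  · apply h0; rw [hv, he, cast_n_sub (by omega)]; push_cast; ring
  · apply h1; rw [hv, he, cast_n_sub (by omega)]; push_cast; ring

omit hadj in
private lemma val_lt3 {v z : ZMod n} (hm : v ≠ z - 1) (h0 : v ≠ z) (h1 : v ≠ z + 1) :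
    (v - (z + 2)).val < n - 3 := by
  have hv : v = (z + 2) + (((v - (z + 2)).val : ℕ) : ZMod n) := (castval _ _).symm
  have hq : (v - (z + 2)).val < n := ZMod.val_lt _
  by_contra hcon
  have he : (v - (z + 2)).val = n - 3 ∨ (v - (z + 2)).val = n - 2 ∨
      (v - (z + 2)).val = n - 1 := by omega
  rcases he with he | he | he
  · apply hm; rw [hv, he, cast_n_sub (by omega)]; push_cast; ring
  · apply h0; rw [hv, he, cast_n_sub (by omega)]; push_cast; ring
  · apply h1; rw [hv, he, cast_n_sub (by omega)]; push_cast; ring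

private lemma zsub :
    ∀ (N : ℕ) (W : Set (ZMod n)) (a : ZMod n), W.ncard ≤ N → a ∉ W →
    ∀ S : Set (ZMod n), S ⊆ W → IsStable A S →
    (∀ T : Set (ZMod n), T ⊆ W → IsStable A T → T.ncard ≤ S.ncard) →
    ∃ P, PartOn A W S P := by
  intro N
  induction N with
  | zero =>
    intro W a hc _ S hSW _ _
    have hW : W = ∅ := by
      rw [← Set.ncard_eq_zero W.toFinite]; omega
    subst hW
    have hS : S = ∅ := Set.subset_empty_iff.mp hSW
    subst hS
    exact ⟨∅, partOn_empty⟩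
  | succ N ih =>
    intro W a hc ha S hSW hst hmax
    rcases Set.eq_empty_or_nonempty W with rfl | ⟨w₀, hw₀⟩
    · have hS : S = ∅ := Set.subset_empty_iff.mp hSW
      subst hS
      exact ⟨∅, partOn_empty⟩
    set R : Set ℕ := {r : ℕ | a + 1 + (r : ZMod n) ∈ W} with hRdef
    have hRne : R.Nonempty := by
      refine ⟨(w₀ - (a + 1)).val, ?_⟩
      simp only [hRdef, Set.mem_setOf_eq]
      rw [castval]
      exact hw₀
    have hr₀mem : a + 1 + ((sInf R : ℕ) : ZMod n) ∈ W := Nat.sInf_mem hRne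
    set w := a + 1 + ((sInf R : ℕ) : ZMod n) with hwdef
    have hwW : w ∈ W := hr₀mem
    have hwm : w - 1 ∉ W := by
      rcases Nat.eq_zero_or_pos (sInf R) with h0 | hpos
      · have hh : w - 1 = a := by rw [hwdef, h0]; push_cast; ring
        rw [hh]; exact ha
      · have h1 : (sInf R - 1) ∉ R := Nat.notMem_of_lt_sInf (by omega)
        have h2 : w - 1 = a + 1 + ((sInf R - 1 : ℕ) : ZMod n) := by
          rw [hwdef, Nat.cast_sub hpos]
          push_cast
          ring
        rw [h2]
        exact h1
    have hwne1 : w ≠ w + 1 := self_ne_add_one hn3 w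
    have hDpair : DAdj A w (w + 1) := dadj_succ hn3 hadj w
    have hnbr : ∀ u, DAdj A w u → (u = w + 1 ∨ u = w - 1) := by
      intro u hD
      rcases (hadj w u).mp hD with h | h
      · exact Or.inl h
      · right; linear_combination -h
    by_cases hw1 : w + 1 ∈ W
    · -- pair block
      obtain ⟨z, hz12, hzS, huz⟩ :
          ∃ z, (z = w ∨ z = w + 1) ∧ z ∈ S ∧ ∀ y, (y = w ∨ y = w + 1) → y ∈ S → y = z := by
        by_cases hwS : w ∈ S
        · refine ⟨w, Or.inl rfl, hwS, ?_⟩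
          rintro y (rfl | rfl) hyS
          · rfl
          · exact absurd hDpair (hst w hwS (w + 1) hyS hwne1)
        · by_cases hw1S : w + 1 ∈ S
          · refine ⟨w + 1, Or.inr rfl, hw1S, ?_⟩
            rintro y (rfl | rfl) hyS
            · exact absurd hyS hwS
            · rfl
          · exfalso
            have hstab' : IsStable A (insert w S) := by
              intro u hu v hv huv hD
              rcases Set.mem_insert_iff.mp hu with rfl | hu'
              · rcases Set.mem_insert_iff.mp hv with rfl | hv'
                · exact huv rfl
                · rcases hnbr v hD with rfl | rfl
                  · exact hw1S hv'
                  · exact hwm (hSW hv')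
              · rcases Set.mem_insert_iff.mp hv with rfl | hv'
                · rcases hnbr u (Or.symm hD) with rfl | rfl
                  · exact hw1S hu'
                  · exact hwm (hSW hu')
                · exact hst u hu' v hv' huv hD
            have hle := hmax _ (Set.insert_subset hwW hSW) hstab'
            rw [Set.ncard_insert_of_notMem hwS S.toFinite] at hle
            omega
      set W' := W \ {w, w + 1} with hW'def
      set S' := S \ {w, w + 1} with hS'def
      have hW'ss : W' ⊂ W := ⟨Set.diff_subset, fun h => (h hwW).2 (by simp)⟩
      have hc' : W'.ncard ≤ N := by
        have := Set.ncard_lt_ncard hW'ss W.toFinite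
        omega
      have ha' : a ∉ W' := fun h => ha h.1
      have hS'W' : S' ⊆ W' := fun v hv => ⟨hSW hv.1, hv.2⟩
      have hst' : IsStable A S' := fun u hu v hv huv => hst u hu.1 v hv.1 huv
      have hS'card : S'.ncard + 1 = S.ncard := by
        have hSz : S' = S \ {z} := by
          ext v
          simp only [hS'def, Set.mem_diff, Set.mem_insert_iff, Set.mem_singleton_iff]
          constructor
          · rintro ⟨hvS, hv12⟩
            refine ⟨hvS, fun h => hv12 ?_⟩
            rw [h]
            exact hz12
          · rintro ⟨hvS, hvz⟩
            exact ⟨hvS, fun h => hvz (huz v h hvS)⟩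
        rw [hSz, Set.ncard_diff_singleton_of_mem hzS]
        have := (Set.ncard_pos S.toFinite).mpr ⟨z, hzS⟩
        omega
      have hmax' : ∀ T, T ⊆ W' → IsStable A T → T.ncard ≤ S'.ncard := by
        intro T hTW' hstT
        have hwT : w ∉ T := fun h => (hTW' h).2 (by simp)
        have hstab' : IsStable A (insert w T) := by
          intro u hu v hv huv hD
          rcases Set.mem_insert_iff.mp hu with rfl | hu'
          · rcases Set.mem_insert_iff.mp hv with rfl | hv'
            · exact huv rfl
            · rcases hnbr v hD with rfl | rfl
              · exact (hTW' hv').2 (by simp)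
              · exact hwm (hTW' hv').1
          · rcases Set.mem_insert_iff.mp hv with rfl | hv'
            · rcases hnbr u (Or.symm hD) with rfl | rfl
              · exact (hTW' hu').2 (by simp)
              · exact hwm (hTW' hu').1
            · exact hstT u hu' v hv' huv hD
        have hle := hmax _ (Set.insert_subset hwW (hTW'.trans Set.diff_subset)) hstab'
        rw [Set.ncard_insert_of_notMem hwT T.toFinite] at hle
        omega
      obtain ⟨P', hP'⟩ := ih W' a hc' ha' S' hS'W' hst' hmax'
      obtain ⟨l₀, hdip, hmem₀⟩ :
          ∃ l₀, IsDiPath A l₀ ∧ ∀ v, v ∈ l₀ ↔ (v = w ∨ v = w + 1) := by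
        rcases arc_succ hn3 hadj w with harc | harc
        · refine ⟨[w, w + 1], ⟨by simp, ?_, by simp [List.Chain', harc]⟩, by intro v; simp⟩
          simp only [List.nodup_cons, List.mem_singleton, List.not_mem_nil, not_false_iff,
            List.nodup_nil, and_true]
          exact hwne1
        · refine ⟨[w + 1, w], ⟨by simp, ?_, by simp [List.Chain', harc]⟩, by intro v; simp; tauto⟩
          simp only [List.nodup_cons, List.mem_singleton, List.not_mem_nil, not_false_iff,
            List.nodup_nil, and_true]
          exact fun h => hwne1 h.symm
      refine ⟨insert l₀ P', partOn_insert hdip ?_ ?_ ?_ ?_ hP'⟩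
      · intro v
        rw [hmem₀ v]
        constructor
        · intro hv
          by_cases h : v = w ∨ v = w + 1
          · exact Or.inr h
          · push_neg at h
            refine Or.inl ⟨hv, ?_⟩
            simp only [Set.mem_insert_iff, Set.mem_singleton_iff]
            tauto
        · rintro (hv | (rfl | rfl))
          · exact hv.1
          · exact hwW
          · exact hw1
      · intro v hv
        rw [hmem₀ v] at hv
        intro hW'
        apply hW'.2
        simp only [Set.mem_insert_iff, Set.mem_singleton_iff]
        tauto
      · refine ⟨z, ⟨(hmem₀ z).mpr hz12, hzS⟩, ?_⟩
        rintro y ⟨hyl, hyS⟩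
        exact huz y ((hmem₀ y).mp hyl) hyS
      · intro v hvW'
        constructor
        · intro h
          exact ⟨h, hvW'.2⟩
        · exact fun h => h.1
    · -- singleton block
      have hwS : w ∈ S := by
        by_contra hwS
        have hstab' : IsStable A (insert w S) := by
          intro u hu v hv huv hD
          rcases Set.mem_insert_iff.mp hu with rfl | hu'
          · rcases Set.mem_insert_iff.mp hv with rfl | hv'
            · exact huv rfl
            · rcases hnbr v hD with rfl | rfl
              · exact hw1 (hSW hv')
              · exact hwm (hSW hv')
          · rcases Set.mem_insert_iff.mp hv with rfl | hv'
            · rcases hnbr u (Or.symm hD) with rfl | rfl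
              · exact hw1 (hSW hu')
              · exact hwm (hSW hu')
            · exact hst u hu' v hv' huv hD
        have hle := hmax _ (Set.insert_subset hwW hSW) hstab'
        rw [Set.ncard_insert_of_notMem hwS S.toFinite] at hle
        omega
      set W' := W \ {w} with hW'def
      set S' := S \ {w} with hS'def
      have hW'ss : W' ⊂ W := ⟨Set.diff_subset, fun h => (h hwW).2 rfl⟩
      have hc' : W'.ncard ≤ N := by
        have := Set.ncard_lt_ncard hW'ss W.toFinite
        omega
      have ha' : a ∉ W' := fun h => ha h.1
      have hS'W' : S' ⊆ W' := fun v hv => ⟨hSW hv.1, hv.2⟩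
      have hst' : IsStable A S' := fun u hu v hv huv => hst u hu.1 v hv.1 huv
      have hS'card : S'.ncard + 1 = S.ncard := by
        rw [hS'def, Set.ncard_diff_singleton_of_mem hwS]
        have := (Set.ncard_pos S.toFinite).mpr ⟨w, hwS⟩
        omega
      have hmax' : ∀ T, T ⊆ W' → IsStable A T → T.ncard ≤ S'.ncard := by
        intro T hTW' hstT
        have hwT : w ∉ T := fun h => (hTW' h).2 rfl
        have hstab' : IsStable A (insert w T) := by
          intro u hu v hv huv hD
          rcases Set.mem_insert_iff.mp hu with rfl | hu'
          · rcases Set.mem_insert_iff.mp hv with rfl | hv'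
            · exact huv rfl
            · rcases hnbr v hD with rfl | rfl
              · exact hw1 (hTW' hv').1
              · exact hwm (hTW' hv').1
          · rcases Set.mem_insert_iff.mp hv with rfl | hv'
            · rcases hnbr u (Or.symm hD) with rfl | rfl
              · exact hw1 (hTW' hu').1
              · exact hwm (hTW' hu').1
            · exact hstT u hu' v hv' huv hD
        have hle := hmax _ (Set.insert_subset hwW (hTW'.trans Set.diff_subset)) hstab'
        rw [Set.ncard_insert_of_notMem hwT T.toFinite] at hle
        omega
      obtain ⟨P', hP'⟩ := ih W' a hc' ha' S' hS'W' hst' hmax'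
      refine ⟨insert [w] P', partOn_insert ⟨by simp, by simp, by simp [List.Chain']⟩ ?_ ?_ ?_ ?_ hP'⟩
      · intro v
        simp only [List.mem_singleton]
        constructor
        · intro hv
          by_cases h : v = w
          · exact Or.inr h
          · exact Or.inl ⟨hv, h⟩
        · rintro (hv | rfl)
          · exact hv.1
          · exact hwW
      · intro v hv
        have hvw : v = w := by simpa using hv
        subst hvw
        exact fun h => h.2 rfl
      · refine ⟨w, ⟨by simp, hwS⟩, ?_⟩
        rintro y ⟨hyl, _⟩
        simpa using hyl
      · intro v hvW'
        exact ⟨fun h => ⟨h, hvW'.2⟩, fun h => h.1⟩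

private lemma alt_lb {S : Set (ZMod n)}
    (hmax : ∀ T : Set (ZMod n), IsStable A T → T.ncard ≤ S.ncard) :
    n / 2 ≤ S.ncard := by
  classical
  set E : Finset (ZMod n) := (Finset.range (n / 2)).image (fun t : ℕ => ((2 * t : ℕ) : ZMod n))
    with hE
  have hcard : E.card = n / 2 := by
    rw [hE, Finset.card_image_of_injOn, Finset.card_range]
    intro t ht t' ht' h
    simp only [Finset.coe_range, Set.mem_Iio] at ht ht'
    have := natinj (by omega) (by omega) h
    omega
  have hstE : IsStable A (↑E : Set (ZMod n)) := by
    intro u hu v hv hne hD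
    simp only [hE, Finset.coe_image, Finset.coe_range, Set.mem_image, Set.mem_Iio] at hu hv
    obtain ⟨t, ht, rfl⟩ := hu
    obtain ⟨t', ht', rfl⟩ := hv
    rcases (hadj _ _).mp hD with h | h
    · have h1 : ((2 * t' : ℕ) : ZMod n) = ((2 * t + 1 : ℕ) : ZMod n) := by
        push_cast
        push_cast at h
        linear_combination h
      have := natinj (by omega) (by omega) h1
      omega
    · have h1 : ((2 * t : ℕ) : ZMod n) = ((2 * t' + 1 : ℕ) : ZMod n) := by
        push_cast
        push_cast at h
        linear_combination h
      have := natinj (by omega) (by omega) h1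
      omega
  have := hmax ↑E hstE
  rw [Set.ncard_coe_finset, hcard] at this
  exact this

private lemma triple_arc {z : ZMod n} (hnss : ¬(IsSource A z ∨ IsSink A z)) :
    (A (z - 1) z ∧ A z (z + 1)) ∨ (A (z + 1) z ∧ A z (z - 1)) := by
  push_neg at hnss
  obtain ⟨hns, hnk⟩ := hnss
  rw [IsSource] at hns
  rw [IsSink] at hnk
  push_neg at hns hnk
  obtain ⟨u, hu⟩ := hns
  obtain ⟨u', hu'⟩ := hnk
  have hu2 : u = z - 1 ∨ u = z + 1 := by
    rcases arc_cases hn3 hadj hu with h | h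
    · left; linear_combination -h
    · right; exact h
  have hu'2 : u' = z + 1 ∨ u' = z - 1 := by
    rcases arc_cases hn3 hadj hu' with h | h
    · left; exact h
    · right; linear_combination -h
  rcases hu2 with rfl | rfl
  · rcases hu'2 with rfl | rfl
    · exact Or.inl ⟨hu, hu'⟩
    · rcases arc_succ hn3 hadj z with h | h
      · exact Or.inl ⟨hu, h⟩
      · exact Or.inr ⟨h, hu'⟩
  · rcases hu'2 with rfl | rfl
    · have harc := arc_succ hn3 hadj (z - 1)
      rw [sub_add_cancel] at harc
      rcases harc with h | h
      · exact Or.inl ⟨h, hu'⟩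
      · exact Or.inr ⟨hu, h⟩
    · exact Or.inr ⟨hu, hu'⟩

private lemma triple_case {S : Set (ZMod n)} (hst : IsStable A S)
    (z y : ZMod n) (hnss : ¬(IsSource A z ∨ IsSink A z))
    (hy : y = z - 1 ∨ y = z ∨ y = z + 1) (hyS : y ∈ S)
    (huy : ∀ u, (u = z - 1 ∨ u = z ∨ u = z + 1) → u ∈ S → u = y)
    (hcard : (n - 2) / 2 + 1 ≤ S.ncard) :
    ∃ P, PartOn A Set.univ S P := by
  obtain ⟨l₀, hdip, hmem₀⟩ :
      ∃ l₀, IsDiPath A l₀ ∧ ∀ v, v ∈ l₀ ↔ (v = z - 1 ∨ v = z ∨ v = z + 1) := by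
    have hne1 : z - 1 ≠ z := sub_one_ne_self hn3 z
    have hne2 : z ≠ z + 1 := self_ne_add_one hn3 z
    have hne3 : z - 1 ≠ z + 1 := sub_one_ne_add_one hn3 z
    rcases triple_arc hn3 hadj hnss with ⟨h1, h2⟩ | ⟨h1, h2⟩
    · refine ⟨[z - 1, z, z + 1], ⟨by simp, ?_, ?_⟩, by intro v; simp⟩
      · refine List.nodup_cons.mpr ⟨?_, List.nodup_cons.mpr ⟨?_, List.nodup_singleton _⟩⟩
        · simp only [List.mem_cons, List.mem_singleton, not_or]
          exact ⟨hne1, hne3, List.not_mem_nil⟩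
        · simp only [List.mem_singleton]
          exact fun hh => hne2 (by simpa using hh)
      · simp only [List.Chain', List.isChain_cons_cons, List.isChain_singleton, and_true]
        exact ⟨h1, h2⟩
    · refine ⟨[z + 1, z, z - 1], ⟨by simp, ?_, ?_⟩, by intro v; simp; tauto⟩
      · refine List.nodup_cons.mpr ⟨?_, List.nodup_cons.mpr ⟨?_, List.nodup_singleton _⟩⟩
        · simp only [List.mem_cons, List.mem_singleton, not_or]
          exact ⟨fun hh => hne2 hh.symm, fun hh => hne3 hh.symm, List.not_mem_nil⟩
        · simp only [List.mem_singleton]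
          exact fun hh => hne1 (by simpa using hh.symm)
      · simp only [List.Chain', List.isChain_cons_cons, List.isChain_singleton, and_true]
        exact ⟨h1, h2⟩
  set W' := Set.univ \ {z - 1, z, z + 1} with hW'def
  set S' := S \ {z - 1, z, z + 1} with hS'def
  have hS'W' : S' ⊆ W' := fun v hv => ⟨Set.mem_univ v, hv.2⟩
  have hst' : IsStable A S' := fun u hu v hv huv => hst u hu.1 v hv.1 huv
  have hS'card : S'.ncard + 1 = S.ncard := by
    have hSz : S' = S \ {y} := by
      ext v
      simp only [hS'def, Set.mem_diff, Set.mem_insert_iff, Set.mem_singleton_iff]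
      constructor
      · rintro ⟨hvS, hv3⟩
        refine ⟨hvS, fun h => hv3 ?_⟩
        rw [h]
        exact hy
      · rintro ⟨hvS, hvy⟩
        exact ⟨hvS, fun h => hvy (huy v h hvS)⟩
    rw [hSz, Set.ncard_diff_singleton_of_mem hyS]
    have := (Set.ncard_pos S.toFinite).mpr ⟨y, hyS⟩
    omega
  have hmax' : ∀ T, T ⊆ W' → IsStable A T → T.ncard ≤ S'.ncard := by
    intro T hTW' hstT
    have hT : ∀ v ∈ T, (v - (z + 2)).val < n - 3 := by
      intro v hv
      have h3 := (hTW' hv).2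
      simp only [Set.mem_insert_iff, Set.mem_singleton_iff, not_or] at h3
      exact val_lt3 hn3 h3.1 h3.2.1 h3.2.2
    have := count_le hn3 hadj hstT (z + 2) (n - 3) hT
    omega
  obtain ⟨P', hP'⟩ :=
    zsub hn3 hadj W'.ncard W' z le_rfl (fun h => h.2 (by simp)) S' hS'W' hst' hmax'
  refine ⟨insert l₀ P', partOn_insert hdip ?_ ?_ ?_ ?_ hP'⟩
  · intro v
    rw [hmem₀ v]
    constructor
    · intro _
      by_cases h : v = z - 1 ∨ v = z ∨ v = z + 1
      · exact Or.inr h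
      · push_neg at h
        refine Or.inl ⟨Set.mem_univ v, ?_⟩
        simp only [Set.mem_insert_iff, Set.mem_singleton_iff]
        tauto
    · intro _
      exact Set.mem_univ v
  · intro v hv
    rw [hmem₀ v] at hv
    intro hW'
    apply hW'.2
    simp only [Set.mem_insert_iff, Set.mem_singleton_iff]
    tauto
  · refine ⟨y, ⟨(hmem₀ y).mpr hy, hyS⟩, ?_⟩
    rintro u ⟨hul, huS⟩
    exact huy u ((hmem₀ u).mp hul) huS
  · intro v hvW'
    exact ⟨fun h => ⟨h, hvW'.2⟩, fun h => h.1⟩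

private lemma pair_case {S : Set (ZMod n)} (hst : IsStable A S)
    (c : ZMod n) (hcS : c ∈ S) (hcard : (n - 1) / 2 + 1 ≤ S.ncard) :
    ∃ P, PartOn A Set.univ S P := by
  have hc1 : c + 1 ∉ S :=
    fun h => hst c hcS (c + 1) h (self_ne_add_one hn3 c) (dadj_succ hn3 hadj c)
  have hwne1 : c ≠ c + 1 := self_ne_add_one hn3 c
  obtain ⟨l₀, hdip, hmem₀⟩ :
      ∃ l₀, IsDiPath A l₀ ∧ ∀ v, v ∈ l₀ ↔ (v = c ∨ v = c + 1) := by
    rcases arc_succ hn3 hadj c with harc | harc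
    · refine ⟨[c, c + 1], ⟨by simp, ?_, by simp [List.Chain', harc]⟩, by intro v; simp⟩
      simp only [List.nodup_cons, List.mem_singleton, List.not_mem_nil, not_false_iff,
        List.nodup_nil, and_true]
      exact hwne1
    · refine ⟨[c + 1, c], ⟨by simp, ?_, by simp [List.Chain', harc]⟩, by intro v; simp; tauto⟩
      simp only [List.nodup_cons, List.mem_singleton, List.not_mem_nil, not_false_iff,
        List.nodup_nil, and_true]
      exact fun h => hwne1 h.symm
  set W' := Set.univ \ {c, c + 1} with hW'def
  set S' := S \ {c, c + 1} with hS'def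
  have hS'W' : S' ⊆ W' := fun v hv => ⟨Set.mem_univ v, hv.2⟩
  have hst' : IsStable A S' := fun u hu v hv huv => hst u hu.1 v hv.1 huv
  have hS'card : S'.ncard + 1 = S.ncard := by
    have hSz : S' = S \ {c} := by
      ext v
      simp only [hS'def, Set.mem_diff, Set.mem_insert_iff, Set.mem_singleton_iff]
      constructor
      · rintro ⟨hvS, hv2⟩
        exact ⟨hvS, fun h => hv2 (Or.inl h)⟩
      · rintro ⟨hvS, hvc⟩
        refine ⟨hvS, ?_⟩
        rintro (h | h)
        · exact hvc h
        · rw [h] at hvS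
          exact hc1 hvS
    rw [hSz, Set.ncard_diff_singleton_of_mem hcS]
    have := (Set.ncard_pos S.toFinite).mpr ⟨c, hcS⟩
    omega
  have hmax' : ∀ T, T ⊆ W' → IsStable A T → T.ncard ≤ S'.ncard := by
    intro T hTW' hstT
    have hT : ∀ v ∈ T, (v - (c + 2)).val < n - 2 := by
      intro v hv
      have h2 := (hTW' hv).2
      simp only [Set.mem_insert_iff, Set.mem_singleton_iff, not_or] at h2
      exact val_lt2 hn3 h2.1 h2.2
    have := count_le hn3 hadj hstT (c + 2) (n - 2) hT
    omega
  obtain ⟨P', hP'⟩ :=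
    zsub hn3 hadj W'.ncard W' c le_rfl (fun h => h.2 (by simp)) S' hS'W' hst' hmax'
  refine ⟨insert l₀ P', partOn_insert hdip ?_ ?_ ?_ ?_ hP'⟩
  · intro v
    rw [hmem₀ v]
    constructor
    · intro _
      by_cases h : v = c ∨ v = c + 1
      · exact Or.inr h
      · push_neg at h
        refine Or.inl ⟨Set.mem_univ v, ?_⟩
        simp only [Set.mem_insert_iff, Set.mem_singleton_iff]
        tauto
    · intro _
      exact Set.mem_univ v
  · intro v hv
    rw [hmem₀ v] at hv
    intro hW'
    apply hW'.2
    simp only [Set.mem_insert_iff, Set.mem_singleton_iff]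
    tauto
  · refine ⟨c, ⟨(hmem₀ c).mpr (Or.inl rfl), hcS⟩, ?_⟩
    rintro u ⟨hul, huS⟩
    rcases (hmem₀ u).mp hul with rfl | rfl
    · rfl
    · exact absurd huS hc1
  · intro v hvW'
    exact ⟨fun h => ⟨h, hvW'.2⟩, fun h => h.1⟩

private lemma zfull
    (hgood : n % 2 = 1 → 5 ≤ n → ∀ d : ZMod n,
      ¬((IsSource A d ∨ IsSink A d) ∧ (IsSource A (d + 1) ∨ IsSink A (d + 1)) ∧
        ∀ t : ℕ, 1 ≤ t → t ≤ n / 2 →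
          (IsSource A (d + ((2 * t : ℕ) : ZMod n)) ∨ IsSink A (d + ((2 * t : ℕ) : ZMod n)))))
    {S : Set (ZMod n)} (hst : IsStable A S)
    (hmax : ∀ T : Set (ZMod n), IsStable A T → T.ncard ≤ S.ncard) :
    ∃ P, PartOn A Set.univ S P := by
  by_cases h3 : n = 3
  · subst h3
    have h1S : 1 ≤ S.ncard := by
      have hstab0 : IsStable A {(0 : ZMod 3)} := by
        intro u hu v hv huv
        rw [Set.mem_singleton_iff] at hu hv
        exact absurd (hu.trans hv.symm) huv
      have := hmax {0} hstab0
      rw [Set.ncard_singleton] at this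
      omega
    obtain ⟨s, hsS⟩ := (Set.ncard_pos S.toFinite).mp (by omega)
    have huniq : ∀ y ∈ S, y = s := by
      intro y hy
      by_contra hne
      have hd3 : ∀ a b : ZMod 3, a ≠ b → (b = a + 1 ∨ a = b + 1) := by decide
      exact hst y hy s hsS hne ((hadj y s).mpr (hd3 y s hne))
    have hall : ∀ l : List (ZMod 3), IsDiPath A l → (∀ v : ZMod 3, v ∈ l) →
        ∃ P, PartOn A Set.univ S P := by
      intro l hdip hl
      refine ⟨{l}, ?_, ?_, ?_, ?_⟩
      · intro l' hl'
        rw [Set.mem_singleton_iff] at hl'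
        subst hl'
        exact hdip
      · intro l' _ v _
        exact Set.mem_univ v
      · intro v _
        refine ⟨l, ⟨rfl, hl v⟩, ?_⟩
        rintro y ⟨hy, _⟩
        exact hy
      · intro l' hl'
        rw [Set.mem_singleton_iff] at hl'
        subst hl'
        exact ⟨s, ⟨hl s, hsS⟩, fun y hy => huniq y hy.2⟩
    have h01 : A 0 1 ∨ A 1 0 := by
      have := arc_succ hn3 hadj 0
      norm_num at this
      exact this
    have h12 : A 1 2 ∨ A 2 1 := by
      have := arc_succ hn3 hadj 1
      norm_num at this
      exact this
    have h20 : A 2 0 ∨ A 0 2 := by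
      have h := (hadj 2 0).mpr (Or.inl (by decide))
      exact h
    rcases h01 with h01 | h10
    · rcases h12 with h12 | h21
      · exact hall [0, 1, 2] ⟨by simp, by decide, by simp [List.Chain', List.isChain_cons_cons, h01, h12]⟩ (by decide)
      · rcases h20 with h20 | h02
        · exact hall [2, 0, 1] ⟨by simp, by decide, by simp [List.Chain', List.isChain_cons_cons, h20, h01]⟩ (by decide)
        · exact hall [0, 2, 1] ⟨by simp, by decide, by simp [List.Chain', List.isChain_cons_cons, h02, h21]⟩ (by decide)
    · rcases h12 with h12 | h21
      · rcases h20 with h20 | h02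
        · exact hall [1, 2, 0] ⟨by simp, by decide, by simp [List.Chain', List.isChain_cons_cons, h12, h20]⟩ (by decide)
        · exact hall [1, 0, 2] ⟨by simp, by decide, by simp [List.Chain', List.isChain_cons_cons, h10, h02]⟩ (by decide)
      · exact hall [2, 1, 0] ⟨by simp, by decide, by simp [List.Chain', List.isChain_cons_cons, h21, h10]⟩ (by decide)
  · have hn4 : 4 ≤ n := by omega
    by_cases hpar : n % 2 = 0
    · -- even cycle
      have hSlb := alt_lb hn3 hadj hmax
      have hSne : S.Nonempty := by
        rw [← Set.ncard_pos S.toFinite]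
        omega
      obtain ⟨c, hcS⟩ := hSne
      exact pair_case hn3 hadj hst c hcS (by omega)
    · -- odd cycle, n ≥ 5
      have hodd : n % 2 = 1 := by omega
      have h5 : 5 ≤ n := by omega
      set k := n / 2 with hkdef
      obtain ⟨d, hdS, hd1S⟩ : ∃ d : ZMod n, d ∉ S ∧ d + 1 ∉ S := by
        by_contra hcon
        push_neg at hcon
        have hSnu : S ≠ Set.univ := by
          intro h
          have h0 : (0 : ZMod n) ∈ S := h ▸ Set.mem_univ _
          have h1 : (1 : ZMod n) ∈ S := h ▸ Set.mem_univ _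
          exact hst 0 h0 1 h1 (fun hh => zmod_one_ne_zero hn3 hh.symm)
            ((hadj 0 1).mpr (Or.inl (by ring)))
        obtain ⟨d₀, hd₀⟩ : ∃ d₀ : ZMod n, d₀ ∉ S := by
          by_contra hc
          push_neg at hc
          exact hSnu (Set.eq_univ_of_forall hc)
        have hub : S.ncard ≤ n / 2 := by
          have hA : ∀ v ∈ S, (v - (d₀ + 1)).val < n - 1 := by
            intro v hv
            exact val_lt1 hn3 (fun h => hd₀ (by rw [← h]; exact hv))
          have := count_le hn3 hadj hst (d₀ + 1) (n - 1) hA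
          omega
        have hcover : Set.univ ⊆ S ∪ (fun v : ZMod n => v - 1) '' S := by
          intro v _
          by_cases hv : v ∈ S
          · exact Or.inl hv
          · exact Or.inr ⟨v + 1, hcon v hv, by ring⟩
        have hle : (Set.univ : Set (ZMod n)).ncard ≤ S.ncard + S.ncard := by
          have h1 := Set.ncard_le_ncard hcover (Set.toFinite _)
          have h2 := Set.ncard_union_le S ((fun v : ZMod n => v - 1) '' S)
          have h3 : ((fun v : ZMod n => v - 1) '' S).ncard = S.ncard :=
            Set.ncard_image_of_injective S (fun a b h => by linear_combination h)
          omega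
        rw [Set.ncard_univ, Nat.card_zmod] at hle
        omega
      have hub : S.ncard ≤ k := by
        have hA : ∀ v ∈ S, (v - (d + 2)).val < n - 2 := by
          intro v hv
          exact val_lt2 hn3 (fun h => hdS (by rw [← h]; exact hv)) (fun h => hd1S (by rw [← h]; exact hv))
        have := count_le hn3 hadj hst (d + 2) (n - 2) hA
        omega
      have hlb : k ≤ S.ncard := alt_lb hn3 hadj hmax
      have hval2 : ∀ v ∈ S, 2 ≤ (v - d).val ∧ (v - d).val ≤ 2 * k := by
        intro v hv
        have hlt : (v - d).val < n := ZMod.val_lt _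
        have h0 : (v - d).val ≠ 0 := by
          intro h
          apply hdS
          have hz : v - d = 0 := by
            rwa [← ZMod.val_eq_zero]
          have hv' : v = d := by linear_combination hz
          rwa [hv'] at hv
        have h1 : (v - d).val ≠ 1 := by
          intro h
          apply hd1S
          have hcast : ((1 : ℕ) : ZMod n) = v - d := by
            rw [← h, val_cast_back]
          have hv' : v = d + 1 := by
            push_cast at hcast
            linear_combination -hcast
          rwa [hv'] at hv
        omega
      have hcells : ∀ i : ℕ, 1 ≤ i → i ≤ k →
          ∃ v ∈ S, (v - d).val = 2 * i ∨ (v - d).val = 2 * i + 1 := by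
        intro i h1 h2
        have hinj := stable_cell_injOn hn3 hadj hst d
        have himg : (fun v => (v - d).val / 2) '' S = Set.Icc 1 k := by
          apply Set.eq_of_subset_of_ncard_le
          · rintro y ⟨v, hv, rfl⟩
            have := hval2 v hv
            simp only [Set.mem_Icc]
            omega
          · rw [← Finset.coe_Icc, Set.ncard_coe_finset, Nat.card_Icc,
              Set.ncard_image_of_injOn hinj]
            omega
          · exact Set.toFinite _
        have hi : i ∈ (fun v => (v - d).val / 2) '' S := by
          rw [himg]
          simp only [Set.mem_Icc]
          omega
        obtain ⟨v, hv, hfv⟩ := hi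
        refine ⟨v, hv, ?_⟩
        have := hval2 v hv
        simp only at hfv
        omega
      have hd2k : d + ((2 * k : ℕ) : ZMod n) ∈ S := by
        obtain ⟨v, hv, hval⟩ := hcells k (by omega) le_rfl
        have hvv : (v - d).val = 2 * k := by
          have := hval2 v hv
          omega
        have hveq : v = d + ((2 * k : ℕ) : ZMod n) := by
          rw [← hvv]
          exact (castval d v).symm
        rw [← hveq]
        exact hv
      have hstruct : ∀ m : ℕ, ∀ i : ℕ, 1 ≤ i → i ≤ k → k - i = m →
          d + ((2 * i : ℕ) : ZMod n) ∈ S := by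
        intro m
        induction m with
        | zero =>
          intro i h1 h2 h3
          have : i = k := by omega
          subst this
          exact hd2k
        | succ m ih =>
          intro i h1 h2 h3
          obtain ⟨v, hv, hval⟩ := hcells i h1 h2
          rcases hval with hval | hval
          · have hvv : v = d + ((2 * i : ℕ) : ZMod n) := by
              rw [← hval]
              exact (castval d v).symm
            rw [← hvv]
            exact hv
          · exfalso
            have hnext : d + ((2 * (i + 1) : ℕ) : ZMod n) ∈ S :=
              ih (i + 1) (by omega) (by omega) (by omega)
            have hvv : v = d + ((2 * i + 1 : ℕ) : ZMod n) := by
              rw [← hval]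
              exact (castval d v).symm
            have hDa : DAdj A v (d + ((2 * (i + 1) : ℕ) : ZMod n)) := by
              apply (hadj _ _).mpr
              left
              rw [hvv]
              push_cast
              ring
            have hne : v ≠ d + ((2 * (i + 1) : ℕ) : ZMod n) := by
              rw [hvv]
              intro h
              have h' : ((2 * i + 1 : ℕ) : ZMod n) = ((2 * (i + 1) : ℕ) : ZMod n) :=
                add_left_cancel h
              have := natinj (by omega) (by omega) h'
              omega
            exact hst v hv _ hnext hne hDa
      have hmem2 : ∀ t : ℕ, 1 ≤ t → t ≤ k → d + ((2 * t : ℕ) : ZMod n) ∈ S :=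
        fun t h1 h2 => hstruct (k - t) t h1 h2 rfl
      by_cases hssd : IsSource A d ∨ IsSink A d
      · by_cases hssd1 : IsSource A (d + 1) ∨ IsSink A (d + 1)
        · by_cases hsst : ∀ t : ℕ, 1 ≤ t → t ≤ k →
              (IsSource A (d + ((2 * t : ℕ) : ZMod n)) ∨ IsSink A (d + ((2 * t : ℕ) : ZMod n)))
          · exact absurd ⟨hssd, hssd1, hsst⟩ (hgood hodd h5 d)
          · push_neg at hsst
            obtain ⟨t, h1t, htk, hnss⟩ := hsst
            set s := d + ((2 * t : ℕ) : ZMod n) with hsdef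
            have hsS : s ∈ S := hmem2 t h1t htk
            refine triple_case hn3 hadj hst s s (not_or.mpr hnss) (Or.inr (Or.inl rfl)) hsS ?_ (by omega)
            rintro u (rfl | rfl | rfl) huS
            · exact absurd ((hadj (s - 1) s).mpr (Or.inl (by ring)))
                (hst (s - 1) huS s hsS (sub_one_ne_self hn3 s))
            · rfl
            · exact absurd ((hadj s (s + 1)).mpr (Or.inl rfl))
                (hst s hsS (s + 1) huS (self_ne_add_one hn3 s))
        · have h2S : d + 2 ∈ S := by
            have h := hmem2 1 le_rfl (by omega)
            norm_num at h
            exact h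
          refine triple_case hn3 hadj hst (d + 1) (d + 2) hssd1
            (Or.inr (Or.inr (by ring))) h2S ?_ (by omega)
          rintro u (rfl | rfl | rfl) huS
          · exact absurd (by rwa [show d + 1 - 1 = d from by ring] at huS) hdS
          · exact absurd huS hd1S
          · ring
      · have hd1 : d - 1 ∈ S := by
          have h2k := hd2k
          have heq : d + ((2 * k : ℕ) : ZMod n) = d - 1 := by
            have hc : ((2 * k : ℕ) : ZMod n) = -1 := by
              have h2kn : 2 * k = n - 1 := by omega
              rw [h2kn, cast_n_sub (by omega)]
              push_cast
              ring
            rw [hc]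
            ring
          rwa [heq] at h2k
        refine triple_case hn3 hadj hst d (d - 1) hssd (Or.inl rfl) hd1 ?_ (by omega)
        rintro u (rfl | rfl | rfl) huS
        · rfl
        · exact absurd huS hdS
        · exact absurd huS hd1S

end WithAdj

end ZModCycle

section BuildAnti

private lemma build_anti {V : Type*} {n : ℕ} [NeZero n] {A : V → V → Prop}
    (x : ZMod n → V) (hxbij : Function.Bijective x)
    (hadjx : ∀ i j, DAdj A (x i) (x j) ↔ (j = i + 1 ∨ i = j + 1))
    (hodd : n % 2 = 1) (h5 : 5 ≤ n) (d : ZMod n)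
    (hd : (∀ u, ¬ A u (x d)) ∨ (∀ u, ¬ A (x d) u))
    (hd1 : (∀ u, ¬ A u (x (d + 1))) ∨ (∀ u, ¬ A (x (d + 1)) u))
    (ht : ∀ t : ℕ, 1 ≤ t → t ≤ n / 2 →
      ((∀ u, ¬ A u (x (d + ((2 * t : ℕ) : ZMod n)))) ∨
        (∀ u, ¬ A (x (d + ((2 * t : ℕ) : ZMod n))) u))) :
    ∃ Wset : Set V, IsAntiDirectedOddCycle (fun a b : Wset => A a.1 b.1) := by
  obtain ⟨k, hkn⟩ : ∃ k, n = 2 * k + 1 := ⟨n / 2, by omega⟩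
  subst hkn
  refine ⟨Set.univ, k, fun m => ⟨x (d + m - 1), Set.mem_univ _⟩, by omega, ⟨?_, ?_⟩, ?_, ?_⟩
  · intro m m' h
    have hxe : x (d + m - 1) = x (d + m' - 1) := congrArg Subtype.val h
    have h2 := hxbij.1 hxe
    linear_combination h2
  · intro w
    obtain ⟨i, hi⟩ := hxbij.2 w.1
    refine ⟨i - d + 1, ?_⟩
    apply Subtype.ext
    show x (d + (i - d + 1) - 1) = w.1
    rw [← hi]
    congr 1
    ring
  · intro i j
    show DAdj A (x (d + i - 1)) (x (d + j - 1)) ↔ _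
    rw [hadjx]
    constructor
    · rintro (h | h)
      · left; linear_combination h
      · right; linear_combination h
    · rintro (h | h)
      · left; linear_combination h
      · right; linear_combination h
  · intro m hm hsel
    have hred : ∀ i : ZMod (2 * k + 1),
        ((∀ u, ¬ A u (x i)) ∨ (∀ u, ¬ A (x i) u)) →
        (IsSource (fun a b : ↥(Set.univ : Set V) => A a.1 b.1) ⟨x i, Set.mem_univ _⟩ ∨
          IsSink (fun a b : ↥(Set.univ : Set V) => A a.1 b.1) ⟨x i, Set.mem_univ _⟩) := by
      intro i h
      rcases h with h | h
      · left; intro u; exact h u.1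
      · right; intro u; exact h u.1
    apply hred
    rcases hsel with hm3 | ⟨hm5, hmk, hmo⟩
    · interval_cases m
      · have he : d + ((0 : ℕ) : ZMod (2 * k + 1)) - 1
            = d + ((2 * k : ℕ) : ZMod (2 * k + 1)) := by
          have hc : ((2 * k : ℕ) : ZMod (2 * k + 1)) = -1 := by
            have h0 : ((2 * k + 1 : ℕ) : ZMod (2 * k + 1)) = 0 := ZMod.natCast_self _
            push_cast at h0 ⊢
            linear_combination h0
          rw [hc]
          push_cast
          ring
        rw [he]
        exact ht k (by omega) (by omega)
      · have he : d + ((1 : ℕ) : ZMod (2 * k + 1)) - 1 = d := by push_cast; ring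
        rw [he]
        exact hd
      · have he : d + ((2 : ℕ) : ZMod (2 * k + 1)) - 1 = d + 1 := by push_cast; ring
        rw [he]
        exact hd1
      · have he : d + ((3 : ℕ) : ZMod (2 * k + 1)) - 1
            = d + ((2 * 1 : ℕ) : ZMod (2 * k + 1)) := by push_cast; ring
        rw [he]
        exact ht 1 le_rfl (by omega)
    · obtain ⟨j, hj⟩ := hmo
      subst hj
      have he : d + ((2 * j + 1 : ℕ) : ZMod (2 * k + 1)) - 1
          = d + ((2 * j : ℕ) : ZMod (2 * k + 1)) := by push_cast; ring
      rw [he]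
      exact ht j (by omega) (by omega)

end BuildAnti

/-- A digraph with no induced anti-directed odd cycle whose underlying graph is a cycle
is α-diperfect. -/
theorem cycle_alphaDiperfect {V : Type*} [Finite V] (A : V → V → Prop)
    (hirr : ∀ v, ¬ A v v) (hcyc : UnderlyingIsCycle A)
    (hA : ¬ ∃ W : Set V, IsAntiDirectedOddCycle (fun a b : W => A a.1 b.1)) :
    AlphaDiperfect A := by
  classical
  intro W Sstar hmaxS
  rcases Set.eq_empty_or_nonempty W with rfl | ⟨w₀, hw₀⟩
  · refine ⟨∅, ⟨⟨fun l hl => absurd hl (Set.notMem_empty l),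
      fun v => absurd v.2 (Set.notMem_empty v.1)⟩,
      fun l hl => absurd hl (Set.notMem_empty l)⟩⟩
  obtain ⟨n, x, hn3, hxbij, hadjx⟩ := hcyc
  haveI : NeZero n := ⟨by omega⟩
  set e := Equiv.ofBijective x hxbij with hedef
  set A' : ZMod n → ZMod n → Prop := fun i j => A (x i) (x j) with hA'def
  have hadj' : ∀ i j, DAdj A' i j ↔ (j = i + 1 ∨ i = j + 1) := hadjx
  set W' : Set (ZMod n) := {i | x i ∈ W} with hW'def
  set S' : Set (ZMod n) := {i | x i ∈ Subtype.val '' Sstar} with hS'def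
  set φ : ↥W → ZMod n := fun u => e.symm u.1 with hphidef
  have hφx : ∀ u : ↥W, x (φ u) = u.1 := fun u => e.apply_symm_apply u.1
  have hφval : ∀ (i : ZMod n) (h : x i ∈ W), φ ⟨x i, h⟩ = i :=
    fun i _ => e.symm_apply_apply i
  have hφinj : Function.Injective φ := by
    intro a b h
    apply Subtype.ext
    rw [← hφx a, ← hφx b, h]
  have hS'img : φ '' Sstar = S' := by
    ext i
    constructor
    · rintro ⟨u, hu, rfl⟩
      exact ⟨u, hu, (hφx u).symm⟩
    · rintro ⟨u, hu, hui⟩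
      refine ⟨u, hu, ?_⟩
      exact hxbij.1 (by rw [hφx u, hui])
  have hstS' : IsStable A' S' := by
    intro u hu v hv hne hD
    obtain ⟨a, ha, hau⟩ := hu
    obtain ⟨b, hb, hbv⟩ := hv
    have hab : a ≠ b := by
      intro h
      apply hne
      apply hxbij.1
      rw [← hau, ← hbv, h]
    refine hmaxS.1 a ha b hb hab ?_
    rcases hD with hD | hD
    · exact Or.inl (show A a.1 b.1 by rw [hau, hbv]; exact hD)
    · exact Or.inr (show A b.1 a.1 by rw [hau, hbv]; exact hD)
  have hS'W' : S' ⊆ W' := by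
    rintro i ⟨a, _, hau⟩
    show x i ∈ W
    rw [← hau]
    exact a.2
  have hmaxS' : ∀ T : Set (ZMod n), T ⊆ W' → IsStable A' T → T.ncard ≤ S'.ncard := by
    intro T hTW hstT
    set Tstar : Set ↥W := {u | φ u ∈ T} with hTdef
    have hTimg : φ '' Tstar = T := by
      apply Set.Subset.antisymm
      · rintro i ⟨u, hu, rfl⟩
        exact hu
      · intro i hi
        have hxW : x i ∈ W := hTW hi
        refine ⟨⟨x i, hxW⟩, ?_, hφval i hxW⟩
        simp only [hTdef, Set.mem_setOf_eq, hφval i hxW]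
        exact hi
    have hstT' : IsStable (fun a b : ↥W => A a.1 b.1) Tstar := by
      intro a ha b hb hne hD
      have hφne : φ a ≠ φ b := fun h => hne (hφinj h)
      refine hstT (φ a) ha (φ b) hb hφne ?_
      rcases hD with hD | hD
      · left
        show A (x (φ a)) (x (φ b))
        rw [hφx a, hφx b]
        exact hD
      · right
        show A (x (φ b)) (x (φ a))
        rw [hφx a, hφx b]
        exact hD
    have h1 : T.ncard = Tstar.ncard := by
      rw [← hTimg, Set.ncard_image_of_injective _ hφinj]
    have h2 : S'.ncard = Sstar.ncard := by
      rw [← hS'img, Set.ncard_image_of_injective _ hφinj]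
    rw [h1, h2]
    exact hmaxS.2 Tstar hstT'
  obtain ⟨P, hP⟩ : ∃ P, PartOn A' W' S' P := by
    by_cases huniv : ∀ i : ZMod n, i ∈ W'
    · have hWu : W' = Set.univ := Set.eq_univ_of_forall huniv
      have hconv : ∀ i : ZMod n, (IsSource A' i ∨ IsSink A' i) →
          ((∀ u, ¬ A u (x i)) ∨ (∀ u, ¬ A (x i) u)) := by
        intro i h
        rcases h with h | h
        · left
          intro u hu
          obtain ⟨j, rfl⟩ := hxbij.2 u
          exact h j hu
        · right
          intro u hu
          obtain ⟨j, rfl⟩ := hxbij.2 u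
          exact h j hu
      have hgood : n % 2 = 1 → 5 ≤ n → ∀ d : ZMod n,
          ¬((IsSource A' d ∨ IsSink A' d) ∧ (IsSource A' (d + 1) ∨ IsSink A' (d + 1)) ∧
            ∀ t : ℕ, 1 ≤ t → t ≤ n / 2 →
              (IsSource A' (d + ((2 * t : ℕ) : ZMod n)) ∨
                IsSink A' (d + ((2 * t : ℕ) : ZMod n)))) := by
        intro hodd h5 d hbad
        obtain ⟨g1, g2, g3⟩ := hbad
        exact hA (build_anti x hxbij hadjx hodd h5 d (hconv d g1) (hconv _ g2)
          (fun t h1 h2 => hconv _ (g3 t h1 h2)))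
      rw [hWu]
      exact zfull hn3 hadj' hgood hstS'
        (fun T hT => hmaxS' T (fun i _ => huniv i) hT)
    · push_neg at huniv
      obtain ⟨a, ha⟩ := huniv
      exact zsub hn3 hadj' W'.ncard W' a le_rfl ha S' hS'W' hstS' hmaxS'
  set g : ZMod n → ↥W := fun i => if h : x i ∈ W then ⟨x i, h⟩ else ⟨w₀, hw₀⟩ with hgdef
  have hgval : ∀ i : ZMod n, x i ∈ W → (g i).1 = x i := by
    intro i h
    simp only [hgdef, dif_pos h]
  obtain ⟨hPdi, hPsub, hPcov, hPone⟩ := hP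
  have hchain : ∀ l : List (ZMod n), (∀ i ∈ l, i ∈ W') → l.Chain' A' →
      (l.map g).Chain' (fun a b : ↥W => A a.1 b.1) := by
    intro l
    induction l with
    | nil => intro _ _; simp [List.Chain']
    | cons i t ih =>
      intro hmem hch
      cases t with
      | nil => simp [List.Chain']
      | cons j t' =>
        rw [List.map_cons, List.map_cons, List.Chain', List.isChain_cons_cons]
        rw [List.Chain', List.isChain_cons_cons] at hch
        constructor
        · show A (g i).1 (g j).1
          rw [hgval i (hmem i (List.mem_cons_self (a := i))),
            hgval j (hmem j (List.mem_cons_of_mem _ (List.mem_cons_self (a := j))))]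
          exact hch.1
        · have hrec := ih (fun a ha => hmem a (List.mem_cons_of_mem _ ha)) hch.2
          rw [List.map_cons] at hrec
          exact hrec
  refine ⟨(fun l => l.map g) '' P, ⟨⟨?_, ?_⟩, ?_⟩⟩
  · rintro l' ⟨l, hlP, rfl⟩
    obtain ⟨hne, hnd, hch⟩ := hPdi l hlP
    refine ⟨by simpa using hne, ?_, hchain l (hPsub l hlP) hch⟩
    refine List.Nodup.map_on ?_ hnd
    intro a ha b hb hab
    have ha' : x a ∈ W := hPsub l hlP a ha
    have hb' : x b ∈ W := hPsub l hlP b hb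
    apply hxbij.1
    rw [← hgval a ha', ← hgval b hb', hab]
  · intro v
    have hx1 : x (e.symm v.1) = v.1 := e.apply_symm_apply v.1
    have hiW : x (e.symm v.1) ∈ W := by
      rw [hx1]
      exact v.2
    obtain ⟨l, ⟨hlP, hil⟩, huniq⟩ := hPcov (e.symm v.1) hiW
    have hgv : g (e.symm v.1) = v := by
      apply Subtype.ext
      rw [hgval _ hiW]
      exact hx1
    refine ⟨l.map g, ⟨⟨l, hlP, rfl⟩, ?_⟩, ?_⟩
    · rw [← hgv]
      exact List.mem_map_of_mem (f := g) hil
    · rintro m ⟨⟨l2, hl2P, rfl⟩, hvm⟩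
      obtain ⟨j, hjl2, hjv⟩ := List.mem_map.mp hvm
      have hjW : x j ∈ W := hPsub l2 hl2P j hjl2
      have hj : j = e.symm v.1 := by
        apply e.injective
        show x j = x (e.symm v.1)
        rw [hx1, ← hgval j hjW, hjv]
      rw [hj] at hjl2
      rw [huniq l2 ⟨hl2P, hjl2⟩]
  · rintro l' ⟨l, hlP, rfl⟩
    obtain ⟨s, ⟨hsl, hsS'⟩, hsu⟩ := hPone l hlP
    have hsW : x s ∈ W := hPsub l hlP s hsl
    have hgs : g s ∈ Sstar := by
      obtain ⟨a, haS, hav⟩ := hsS'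
      have hga : g s = a := by
        apply Subtype.ext
        rw [hgval s hsW, ← hav]
      rw [hga]
      exact haS
    refine ⟨g s, ⟨List.mem_map_of_mem (f := g) hsl, hgs⟩, ?_⟩
    rintro y ⟨hym, hyS⟩
    obtain ⟨j, hjl, hjy⟩ := List.mem_map.mp hym
    have hjW : x j ∈ W := hPsub l hlP j hjl
    have hjS' : j ∈ S' := by
      show x j ∈ Subtype.val '' Sstar
      refine ⟨y, hyS, ?_⟩
      rw [← hjy]
      exact hgval j hjW
    have hjs := hsu j ⟨hjl, hjS'⟩
    rw [← hjy, hjs]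
end
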